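/- arXiv:math/0607218 — 2 statements merged into one kernel-verified Lean document; each statement's English description precedes it below -/
import Mathlib

section
/- For p, q ∈ Q*_λ: p ≤* q if and only if |q ∖ Σ(p)| < λ. -/
namespace RS889

noncomputable section

open Cardinal Set

universe u v

/-- `F` is a (proper) filter on the set `Z`, presented as the family of its members. -/
def IsFilterOn {α : Type u} (F : Set (Set α)) (Z : Set α) : Prop :=
  (∀ A ∈ F, A ⊆ Z) ∧ Z ∈ F ∧
    (∀ A ∈ F, ∀ B, A ⊆ B → B ⊆ Z → B ∈ F) ∧
    (∀ A ∈ F, ∀ B ∈ F, A ∩ B ∈ F) ∧ ∅ ∉ F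

/-- The family `F⁺` of `F`-positive subsets of `Z`. -/
def posOf {α : Type u} (F : Set (Set α)) (Z : Set α) : Set (Set α) :=
  {B | B ⊆ Z ∧ ∀ C ∈ F, (B ∩ C).Nonempty}

/-- `F` is an ultrafilter on the set `Z`. -/
def IsUltraOn {α : Type u} (F : Set (Set α)) (Z : Set α) : Prop :=
  IsFilterOn F Z ∧ ∀ A ⊆ Z, A ∈ F ∨ Z \ A ∈ F

/-- An unultra filter: every positive set splits into two positive pieces. -/
def Unultra {α : Type u} (F : Set (Set α)) (Z : Set α) : Prop :=
  ∀ A ∈ posOf F Z, ∃ B ⊆ A, B ∈ posOf F Z ∧ A \ B ∈ posOf F Z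

/-- The sum `⊕^E_{x ∈ X} Fx x` of the filters `Fx x` on the sets `Z x` over a filter `E` on `X`. -/
def filSum {α : Type u} {β : Type v} (X : Set α) (E : Set (Set α))
    (Z : α → Set β) (Fx : α → Set (Set β)) : Set (Set β) :=
  {A | A ⊆ (⋃ x ∈ X, Z x) ∧ {x | x ∈ X ∧ Z x ∩ A ∈ Fx x} ∈ E}

/-- The sum `⊕_{ζ<ξ} F ζ` over the filter of co-bounded subsets of `ξ`. -/
def cobddSum {α : Type u} (ξ : Ordinal.{0}) (Z : Ordinal.{0} → Set α)
    (F : Ordinal.{0} → Set (Set α)) : Set (Set α) :=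
  {A | A ⊆ (⋃ ζ ∈ Set.Iio ξ, Z ζ) ∧ ∃ β < ξ, ∀ ζ, β ≤ ζ → ζ < ξ → Z ζ ∩ A ∈ F ζ}

/-- A triple `(α, Z, F)`: an ordinal, a set of ordinals and a family of subsets of `Z`
(intended to be a filter on `Z`). -/
structure LocalFilter : Type 1 where
  a : Ordinal.{0}
  Z : Set Ordinal.{0}
  F : Set (Set Ordinal.{0})

/-- A system of local filters on `lam`. -/
def IsLFS (lam : Cardinal.{0}) (S : Set LocalFilter) : Prop :=
  (∀ t ∈ S, t.Z ⊆ Set.Iio lam.ord ∧ #t.Z < Cardinal.lift.{1} lam ∧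
      IsLeast t.Z t.a ∧ IsFilterOn t.F t.Z) ∧
    ∀ β < lam.ord, ∃ t ∈ S, β ≤ t.a

/-- The family `Q*_lam(S)`. -/
def Qstar (lam : Cardinal.{0}) (S : Set LocalFilter) : Set (Set LocalFilter) :=
  {r | r ⊆ S ∧ #r = Cardinal.lift.{1} lam ∧
    ∀ ξ : Ordinal.{0}, #{t | t ∈ r ∧ t.a = ξ} < Cardinal.lift.{1} lam}

/-- The filter `fil(r)` on `lam` generated by `r`. -/
def fil (lam : Cardinal.{0}) (r : Set LocalFilter) : Set (Set Ordinal.{0}) :=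
  {A | A ⊆ Set.Iio lam.ord ∧ ∃ ε < lam.ord, ∀ t ∈ r, ε ≤ t.a → A ∩ t.Z ∈ t.F}

/-- `r` is strongly disjoint. -/
def StronglyDisjoint (r : Set LocalFilter) : Prop :=
  (∀ s ∈ r, ∀ t ∈ r, s.a = t.a → s = t) ∧
    ∀ s ∈ r, ∀ t ∈ r, s.a < t.a → s.Z ⊆ Set.Iio t.a

/-- The family `Q⁰_lam(S)` of strongly disjoint members of `Q*_lam(S)`. -/
def Qzero (lam : Cardinal.{0}) (S : Set LocalFilter) : Set (Set LocalFilter) :=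
  {r | r ∈ Qstar lam S ∧ StronglyDisjoint r}

/-- `fil(H) = ⋃ { fil(r) : r ∈ H }`. -/
def filH (lam : Cardinal.{0}) (H : Set (Set LocalFilter)) : Set (Set Ordinal.{0}) :=
  {A | ∃ r ∈ H, A ∈ fil lam r}

/-- A uniform family of subsets of `lam`: every member has cardinality `lam`. -/
def IsUniform (lam : Cardinal.{0}) (D : Set (Set Ordinal.{0})) : Prop :=
  ∀ A ∈ D, #A = Cardinal.lift.{1} lam

/-- `C` is a club (closed unbounded) subset of `lam`. -/
def IsClub (lam : Cardinal.{0}) (C : Set Ordinal.{0}) : Prop :=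
  C ⊆ Set.Iio lam.ord ∧ (∀ β < lam.ord, ∃ γ ∈ C, β < γ) ∧
    ∀ δ, δ < lam.ord → δ ≠ 0 → (∀ β < δ, ∃ γ ∈ C, β < γ ∧ γ < δ) → δ ∈ C

/-- `St` is stationary in `lam`. -/
def IsStationary (lam : Cardinal.{0}) (St : Set Ordinal.{0}) : Prop :=
  ∀ C, IsClub lam C → (St ∩ C).Nonempty

/-- `D` is a weakly reasonable (ultra)filter on `lam`. -/
def WeaklyReasonable (lam : Cardinal.{0}) (D : Set (Set Ordinal.{0})) : Prop :=
  ∀ f : Ordinal.{0} → Ordinal.{0},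
    (∀ δ < lam.ord, f δ < lam.ord) →
    (∀ δ δ', δ ≤ δ' → δ' < lam.ord → f δ ≤ f δ') →
    (∀ β < lam.ord, ∃ δ < lam.ord, β ≤ f δ) →
    ∃ C, IsClub lam C ∧ (⋃ δ ∈ C, Set.Ico δ (δ + f δ)) ∉ D

/-- `e` is the increasing enumeration of `C ∪ {0}` (in order type `lam`). -/
def IsEnum (lam : Cardinal.{0}) (C : Set Ordinal.{0}) (e : Ordinal.{0} → Ordinal.{0}) : Prop :=
  (∀ ξ η, ξ < η → η < lam.ord → e ξ < e η) ∧
    (∀ ξ < lam.ord, e ξ ∈ insert 0 C) ∧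
    ∀ γ ∈ insert 0 C, ∃ ξ < lam.ord, e ξ = γ

/-- The quotient `D/C`, where `e` is the increasing enumeration of `C ∪ {0}`. -/
def quotFil (lam : Cardinal.{0}) (D : Set (Set Ordinal.{0})) (e : Ordinal.{0} → Ordinal.{0}) :
    Set (Set Ordinal.{0}) :=
  {A | A ⊆ Set.Iio lam.ord ∧ (⋃ ξ ∈ A, Set.Ico (e ξ) (e (ξ + 1))) ∈ D}

/-- `d` is an increasing continuous sequence of ordinals below `lam` (indexed by `ξ < lam`). -/
def IncrCont (lam : Cardinal.{0}) (d : Ordinal.{0} → Ordinal.{0}) : Prop :=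
  (∀ ξ < lam.ord, d ξ < lam.ord) ∧
    (∀ ξ η, ξ < η → η < lam.ord → d ξ < d η) ∧
    ∀ δ, δ < lam.ord → Order.IsSuccLimit δ → ∀ β < d δ, ∃ ξ < δ, β ≤ d ξ

/-- The full system `𝓕^ult` of local non-principal ultrafilters on `lam`. -/
def Fult (lam : Cardinal.{0}) : Set LocalFilter :=
  {t | t.a < lam.ord ∧ t.a ∈ t.Z ∧ t.Z ⊆ {o | t.a ≤ o ∧ o < lam.ord} ∧
      t.Z.Infinite ∧ #t.Z < Cardinal.lift.{1} lam ∧ IsUltraOn t.F t.Z ∧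
      ∀ x : Ordinal.{0}, ({x} : Set Ordinal.{0}) ∉ t.F}

/-- `Σ(p)`. -/
def SigmaP (lam : Cardinal.{0}) (p : Set LocalFilter) : Set LocalFilter :=
  {t | t ∈ Fult lam ∧ ∀ A ∈ t.F, ∃ s ∈ p, A ∩ s.Z ∈ s.F}

/-- A linked family `H ⊆ Q*_lam`. -/
def Linked (lam : Cardinal.{0}) (H : Set (Set LocalFilter)) : Prop :=
  H.Nonempty ∧ ∀ S : Set (Set LocalFilter), S ⊆ H → S.Finite → S.Nonempty →
    #{α : Ordinal.{0} | ∃ t : LocalFilter, t.a = α ∧ ∀ p ∈ S, t ∈ SigmaP lam p} =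
      Cardinal.lift.{1} lam

/-- A big family `H ⊆ Q*_lam`. -/
def Big (lam : Cardinal.{0}) (H : Set (Set LocalFilter)) : Prop :=
  H.Nonempty ∧ ∀ D ⊆ Fult lam, ∃ q ∈ H, q ⊆ D ∨ q ∩ D = ∅

/-- The condition `(⊕)^sum_S`. -/
def SumCond (lam : Cardinal.{0}) (S : Set LocalFilter) : Prop :=
  ∀ κ : Cardinal.{0}, ℵ₀ ≤ κ → κ < lam →
    ∀ t : Ordinal.{0} → LocalFilter,
      (∀ ξ < κ.ord, t ξ ∈ S) →
      (∀ ξ ζ, ξ < ζ → ζ < κ.ord → (t ξ).Z ⊆ Set.Iio (t ζ).a) →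
      ∃ E : Set (Set Ordinal.{0}), IsFilterOn E (Set.Iio κ.ord) ∧
        (∀ A ∈ E, #A = Cardinal.lift.{1} κ) ∧
        (LocalFilter.mk (t 0).a (⋃ ξ ∈ Set.Iio κ.ord, (t ξ).Z)
          (filSum (Set.Iio κ.ord) E (fun ξ => (t ξ).Z) (fun ξ => (t ξ).F))) ∈ S

/-- `(<lam⁺)`-completeness of a subfamily `Q` of `Q*` with respect to `≤*`. -/
def Complete (lam : Cardinal.{0}) (Q : Set (Set LocalFilter)) : Prop :=
  ∀ γ : Ordinal.{0}, γ.card ≤ lam →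
    ∀ p : Ordinal.{0} → Set LocalFilter,
      (∀ ξ < γ, p ξ ∈ Q) →
      (∀ ξ ζ, ξ ≤ ζ → ζ < γ → fil lam (p ξ) ⊆ fil lam (p ζ)) →
      ∃ q ∈ Q, ∀ ξ < γ, fil lam (p ξ) ⊆ fil lam q

/-- The full system `𝓕₀` of co-bounded filters on `lam`. -/
def Fcobdd (lam : Cardinal.{0}) : Set LocalFilter :=
  {t | t.a ∈ t.Z ∧ t.Z ⊆ {o | t.a ≤ o ∧ o < lam.ord} ∧
      #t.Z < Cardinal.lift.{1} lam ∧ sSup t.Z ∉ t.Z ∧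
      t.F = {A | A ⊆ t.Z ∧ ∃ β < sSup t.Z, ∀ x ∈ t.Z, β ≤ x → x ∈ A}}

/-- The `Ē`-closure of a system `S` of local filters (as an inductive family:
it is closed under `E κ`-sums of `κ`-sequences of previously obtained triples). -/
inductive EClos (lam : Cardinal.{0}) (E : Cardinal.{0} → Set (Set Ordinal.{0}))
    (S : Set LocalFilter) : LocalFilter → Prop
  | base : ∀ t ∈ S, EClos lam E S t
  | sum : ∀ κ : Cardinal.{0}, ℵ₀ ≤ κ → κ < lam →
      ∀ t : Ordinal.{0} → LocalFilter,
        (∀ ξ < κ.ord, EClos lam E S (t ξ)) →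
        (∀ ξ ζ, ξ < ζ → ζ < κ.ord → (t ξ).Z ⊆ Set.Iio (t ζ).a) →
        EClos lam E S (LocalFilter.mk (t 0).a (⋃ ξ ∈ Set.Iio κ.ord, (t ξ).Z)
          (filSum (Set.Iio κ.ord) (E κ) (fun ξ => (t ξ).Z) (fun ξ => (t ξ).F)))

/-- The full system `𝓕^unu` of local unultra filters on `lam`. -/
def Funu (lam : Cardinal.{0}) : Set LocalFilter :=
  {t | t.Z.Nonempty ∧ t.Z ⊆ Set.Iio lam.ord ∧ #t.Z < Cardinal.lift.{1} lam ∧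
      IsLeast t.Z t.a ∧ IsFilterOn t.F t.Z ∧ Unultra t.F t.Z}

/-- A pararegularity system for `F` (on `Z`), indexed by finite subsets of `κ`. -/
def PRSystem (κ : Cardinal.{0}) (F : Set (Set Ordinal.{0})) (Z : Set Ordinal.{0}) : Prop :=
  ∃ A : Finset Ordinal.{0} → Set Ordinal.{0},
    (∀ u : Finset Ordinal.{0}, ↑u ⊆ Set.Iio κ.ord → A u ∈ F) ∧
    (∀ u v : Finset Ordinal.{0}, ↑v ⊆ Set.Iio κ.ord → u ⊆ v → A v ⊆ A u) ∧
    (∀ U : Set Ordinal.{0}, U ⊆ Set.Iio κ.ord → U.Infinite →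
      (⋂ ξ ∈ U, A {ξ}) = ∅) ∧
    F = {B | B ⊆ Z ∧ ∃ u : Finset Ordinal.{0}, ↑u ⊆ Set.Iio κ.ord ∧ A u ⊆ B}

/-- `F` is a pararegular filter on `Z` (with `α = min Z`). -/
def Pararegular (lam : Cardinal.{0}) (F : Set (Set Ordinal.{0})) (Z : Set Ordinal.{0})
    (α : Ordinal.{0}) : Prop :=
  ∃ κ : Cardinal.{0}, (Ordinal.omega0 + α).card ≤ κ ∧ κ < lam ∧ PRSystem κ F Z

/-- `F` is a strongly pararegular filter on `Z` (with `α = min Z`). -/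
def StronglyPararegular (lam : Cardinal.{0}) (F : Set (Set Ordinal.{0})) (Z : Set Ordinal.{0})
    (α : Ordinal.{0}) : Prop :=
  ∃ κ : Cardinal.{0}, 2 ^ (Ordinal.omega0 + α).card ≤ κ ∧ κ < lam ∧ PRSystem κ F Z

/-- The full system `𝓕^pr` of local pararegular filters on `lam`. -/
def Fpr (lam : Cardinal.{0}) : Set LocalFilter :=
  {t | t.Z.Infinite ∧ t.Z ⊆ Set.Iio lam.ord ∧ #t.Z < Cardinal.lift.{1} lam ∧
      IsLeast t.Z t.a ∧ IsFilterOn t.F t.Z ∧ Pararegular lam t.F t.Z t.a}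

/-- The full system `𝓕^spr` of local strongly pararegular filters on `lam`. -/
def Fspr (lam : Cardinal.{0}) : Set LocalFilter :=
  {t | t.Z.Infinite ∧ t.Z ⊆ Set.Iio lam.ord ∧ #t.Z < Cardinal.lift.{1} lam ∧
      IsLeast t.Z t.a ∧ IsFilterOn t.F t.Z ∧ StronglyPararegular lam t.F t.Z t.a}

/-- The space `^lam lam`. -/
def Fn (lam : Cardinal.{0}) : Type 1 := ↥(Set.Iio lam.ord) → ↥(Set.Iio lam.ord)

/-- The basic open set `O_s` determined by a partial function `s` of length `γ`. -/
def basicOpen (lam : Cardinal.{0}) (γ : Ordinal.{0}) (s : Ordinal.{0} → Ordinal.{0}) : Set (Fn lam) :=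
  {f | ∀ ξ : ↥(Set.Iio lam.ord), (ξ : Ordinal.{0}) < γ → ((f ξ : Ordinal.{0}) = s ξ)}

/-- `X ⊆ ^lam lam` is nowhere dense. -/
def NwDense (lam : Cardinal.{0}) (X : Set (Fn lam)) : Prop :=
  ∀ γ < lam.ord, ∀ s : Ordinal.{0} → Ordinal.{0}, (∀ ξ < γ, s ξ < lam.ord) →
    ∃ γ', γ ≤ γ' ∧ γ' < lam.ord ∧ ∃ s' : Ordinal.{0} → Ordinal.{0},
      (∀ ξ < γ', s' ξ < lam.ord) ∧ (∀ ξ < γ, s' ξ = s ξ) ∧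
      basicOpen lam γ' s' ∩ X = ∅

/-- `X` belongs to the ideal `M^lam_{lam,lam}`: it is covered by `lam` many
nowhere dense sets. -/
def MeagerSet (lam : Cardinal.{0}) (X : Set (Fn lam)) : Prop :=
  ∃ A : Ordinal.{0} → Set (Fn lam), (∀ ξ < lam.ord, NwDense lam (A ξ)) ∧
    X ⊆ ⋃ ξ ∈ Set.Iio lam.ord, A ξ

/-- `cov(M^lam_{lam,lam})`. -/
def covM (lam : Cardinal.{0}) : Cardinal.{1} :=
  sInf {c | ∃ 𝓐 : Set (Set (Fn lam)), (∀ X ∈ 𝓐, MeagerSet lam X) ∧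
    ⋃₀ 𝓐 = Set.univ ∧ #𝓐 = c}

/-- Nodes of trees of sequences of ordinals: a pair (level, function). -/
abbrev TNode : Type 1 := Ordinal.{0} × (Ordinal.{0} → Ordinal.{0})

/-- Truncation of a function below `γ` (with value `0` elsewhere). -/
def truncF (γ : Ordinal.{0}) (f : Ordinal.{0} → Ordinal.{0}) : Ordinal.{0} → Ordinal.{0} :=
  fun ξ => if ξ < γ then f ξ else 0

/-- `T` is a tree of height `lam` of (normalized) sequences of ordinals `< lam`. -/
def IsTree (lam : Cardinal.{0}) (T : Set TNode) : Prop :=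
  (∀ x ∈ T, x.1 < lam.ord ∧ (∀ ξ < x.1, x.2 ξ < lam.ord) ∧ x.2 = truncF x.1 x.2) ∧
    ∀ x ∈ T, ∀ γ ≤ x.1, (γ, truncF γ x.2) ∈ T

/-- The `γ`-th level of `T`. -/
def treeLevel (T : Set TNode) (γ : Ordinal.{0}) : Set TNode := {x | x ∈ T ∧ x.1 = γ}

/-- `T` is a `lam`-Kurepa tree: a tree of height `lam` all of whose levels are
nonempty of cardinality `< lam`. -/
def IsKurepaTree (lam : Cardinal.{0}) (T : Set TNode) : Prop :=
  IsTree lam T ∧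
    ∀ γ < lam.ord, (treeLevel T γ).Nonempty ∧
      #(treeLevel T γ) < Cardinal.lift.{1} lam

/-- The set of `lam`-branches of `T` (normalized functions all of whose proper
initial segments lie in `T`). -/
def branches (lam : Cardinal.{0}) (T : Set TNode) : Set (Ordinal.{0} → Ordinal.{0}) :=
  {f | f = truncF lam.ord f ∧ ∀ γ < lam.ord, (γ, truncF γ f) ∈ T}


/-! ### Auxiliary lemmas for Observation 2.6(1) -/

section Aux

variable {lam : Cardinal.{0}}

private lemma lift_isRegular (hreg : lam.IsRegular) :
    (Cardinal.lift.{1} lam).IsRegular := by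
  refine ⟨Cardinal.aleph0_le_lift.2 hreg.1, ?_⟩
  rw [← Cardinal.lift_ord, ← Ordinal.lift_cof]
  exact Cardinal.lift_le.2 hreg.2

/-- A set of ordinals below `lam.ord` of cardinality `< lam` is bounded. -/
private lemma bounded_of_card_lt (hreg : lam.IsRegular) {W : Set Ordinal.{0}}
    (hW : ∀ x ∈ W, x < lam.ord) (hc : #W < Cardinal.lift.{1} lam) :
    ∃ η < lam.ord, ∀ x ∈ W, x < η := by
  obtain ⟨κ, hκlt, hκ⟩ := Cardinal.lt_lift_iff.1 hc
  have hmk : Cardinal.lift.{1} #κ.out = Cardinal.lift.{0} #(↥W) := by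
    rw [Cardinal.mk_out, hκ, Cardinal.lift_id']
  obtain ⟨e⟩ := Cardinal.lift_mk_eq'.1 hmk
  have hf : ∀ i : κ.out, ((e i : Ordinal.{0})) < lam.ord := fun i => hW _ (e i).2
  have hsup : (⨆ i : κ.out, ((e i : Ordinal.{0}))) < lam.ord :=
    Cardinal.iSup_lt_ord_of_isRegular hreg (by rwa [Cardinal.mk_out]) hf
  refine ⟨(⨆ i : κ.out, ((e i : Ordinal.{0}))) + 1, ?_, ?_⟩
  · rw [Ordinal.add_one_eq_succ]
    exact (Cardinal.isSuccLimit_ord hreg.1).succ_lt hsup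
  · intro x hx
    have hle : ((e (e.symm ⟨x, hx⟩) : Ordinal.{0})) ≤ ⨆ i : κ.out, ((e i : Ordinal.{0})) :=
      le_ciSup (Ordinal.bddAbove_range _) _
    rw [e.apply_symm_apply] at hle
    exact lt_of_le_of_lt hle (lt_of_lt_of_le (Order.lt_succ _) (by rw [Ordinal.add_one_eq_succ]))

/-- A subset of `r` all of whose minima are `< β` has cardinality `< lam`. -/
private lemma card_lt_of_a_lt (hreg : lam.IsRegular) {r B : Set LocalFilter}
    (hr : ∀ ξ : Ordinal.{0}, #{t : LocalFilter | t ∈ r ∧ t.a = ξ} < Cardinal.lift.{1} lam)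
    {β : Ordinal.{0}} (hβ : β < lam.ord) (hB : ∀ t ∈ B, t ∈ r ∧ t.a < β) :
    #(↥B) < Cardinal.lift.{1} lam := by
  have hsub : B ⊆ ⋃ ξ : ↥(Set.Iio β), {t : LocalFilter | t ∈ r ∧ t.a = ξ.1} := by
    intro t ht
    exact Set.mem_iUnion.2 ⟨⟨t.a, (hB t ht).2⟩, ⟨(hB t ht).1, rfl⟩⟩
  refine lt_of_le_of_lt (Cardinal.mk_le_mk_of_subset hsub) ?_
  refine lt_of_le_of_lt Cardinal.mk_iUnion_le_sum_mk ?_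
  refine Cardinal.sum_lt_of_isRegular (lift_isRegular hreg) ?_ (fun ξ => hr ξ.1)
  rw [Ordinal.mk_Iio_ordinal]
  exact Cardinal.lift_lt.2 (Cardinal.lt_ord.1 hβ)

private lemma union_Z_card_lt (hreg : lam.IsRegular) {S : Set LocalFilter}
    (hS : #(↥S) < Cardinal.lift.{1} lam)
    (hZ : ∀ t ∈ S, #(↥t.Z) < Cardinal.lift.{1} lam) :
    #(↥(⋃ t ∈ S, t.Z)) < Cardinal.lift.{1} lam := by
  rw [Set.biUnion_eq_iUnion]
  exact lt_of_le_of_lt Cardinal.mk_iUnion_le_sum_mk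
    (Cardinal.sum_lt_of_isRegular (lift_isRegular hreg) hS (fun t => hZ t.1 t.2))

/-- In a `Qstar`-like family of total cardinality `≥ lam`, minima are unbounded. -/
private lemma exists_a_ge (hreg : lam.IsRegular) {r X : Set LocalFilter} (hXr : X ⊆ r)
    (hr : ∀ ξ : Ordinal.{0}, #{t : LocalFilter | t ∈ r ∧ t.a = ξ} < Cardinal.lift.{1} lam)
    (hX : Cardinal.lift.{1} lam ≤ #(↥X)) {β : Ordinal.{0}} (hβ : β < lam.ord) :
    ∃ t ∈ X, β ≤ t.a := by
  by_contra hcon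
  push_neg at hcon
  exact absurd (card_lt_of_a_lt hreg hr hβ (fun t ht => ⟨hXr ht, hcon t ht⟩)) (not_lt.2 hX)

/-- Complement within an ultrafilter. -/
private lemma ultra_compl {F : Set (Set Ordinal.{0})} {Z A : Set Ordinal.{0}}
    (hu : IsUltraOn F Z) (hn : A ∩ Z ∉ F) : Z \ A ∈ F := by
  rcases hu.2 (A ∩ Z) Set.inter_subset_right with h | h
  · exact absurd h hn
  · rwa [Set.diff_inter_self_eq_diff] at h

/-- A recursively defined increasing sequence of ordinals. -/
private noncomputable def deltaSeq (h : Ordinal.{0} → Ordinal.{0}) (i : Ordinal.{0}) :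
    Ordinal.{0} :=
  h (⨆ j : Set.Iio i, deltaSeq h j.1)
termination_by i
decreasing_by exact j.2

private lemma deltaSeq_def (h : Ordinal.{0} → Ordinal.{0}) (i : Ordinal.{0}) :
    deltaSeq h i = h (⨆ j : Set.Iio i, deltaSeq h j.1) := by
  rw [deltaSeq]

end Aux

private lemma fult_aLt {lam : Cardinal.{0}} {t : LocalFilter} (h : t ∈ Fult lam) :
    t.a < lam.ord := h.1

private lemma fult_Zsub {lam : Cardinal.{0}} {t : LocalFilter} (h : t ∈ Fult lam) :
    t.Z ⊆ {o | t.a ≤ o ∧ o < lam.ord} := h.2.2.1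

private lemma fult_Zcard {lam : Cardinal.{0}} {t : LocalFilter} (h : t ∈ Fult lam) :
    #(↥t.Z) < Cardinal.lift.{1} lam := h.2.2.2.2.1

private lemma fult_ultra {lam : Cardinal.{0}} {t : LocalFilter} (h : t ∈ Fult lam) :
    IsUltraOn t.F t.Z := h.2.2.2.2.2.1

private lemma filt_sub {F : Set (Set Ordinal.{0})} {Z : Set Ordinal.{0}}
    (h : IsFilterOn F Z) : ∀ A ∈ F, A ⊆ Z := h.1

private lemma filt_up {F : Set (Set Ordinal.{0})} {Z : Set Ordinal.{0}}
    (h : IsFilterOn F Z) : ∀ A ∈ F, ∀ B, A ⊆ B → B ⊆ Z → B ∈ F := h.2.2.1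

private lemma filt_inter {F : Set (Set Ordinal.{0})} {Z : Set Ordinal.{0}}
    (h : IsFilterOn F Z) : ∀ A ∈ F, ∀ B ∈ F, A ∩ B ∈ F := h.2.2.2.1

private lemma filt_ne {F : Set (Set Ordinal.{0})} {Z : Set Ordinal.{0}}
    (h : IsFilterOn F Z) : ∅ ∉ F := h.2.2.2.2

/-- Observation 2.6(1): `p ≤* q` iff `|q ∖ Σ(p)| < lam`. -/
theorem stmt14 (lam : Cardinal.{0}) (hreg : lam.IsRegular) (hunc : ℵ₀ < lam)
    (p q : Set LocalFilter)
    (hp : p ∈ Qstar lam (Fult lam)) (hq : q ∈ Qstar lam (Fult lam)) :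
    fil lam p ⊆ fil lam q ↔ #(↥(q \ SigmaP lam p)) < Cardinal.lift.{1} lam := by
  obtain ⟨hpF, hpcard, hplev⟩ := hp
  obtain ⟨hqF, hqcard, hqlev⟩ := hq
  have hlim := Cardinal.isSuccLimit_ord hreg.1
  have hsucclt : ∀ o : Ordinal.{0}, o < lam.ord → o + 1 < lam.ord := by
    intro o ho; rw [Ordinal.add_one_eq_succ]; exact hlim.succ_lt ho
  have hlt1 : ∀ o : Ordinal.{0}, o < o + 1 := by
    intro o; rw [Ordinal.add_one_eq_succ]; exact Order.lt_succ o
  constructor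
  · -- forward direction
    intro hfil
    by_contra hbig
    push_neg at hbig
    set X : Set LocalFilter := q \ SigmaP lam p with hXdef
    have hXq : X ⊆ q := Set.diff_subset
    -- choose the witnessing null sets
    have hAch : ∀ t ∈ X, ∃ A, A ∈ t.F ∧ ∀ s ∈ p, A ∩ s.Z ∉ s.F := by
      intro t ht
      have htF : t ∈ Fult lam := hqF ht.1
      have hns := ht.2
      by_contra hcon
      push_neg at hcon
      exact hns ⟨htF, fun A hA => hcon A hA⟩
    choose! Aset hAmem hAnull using hAch
    -- choose elements of X with large minima
    have hTch : ∀ β : Ordinal.{0}, ∃ t : LocalFilter, β < lam.ord → t ∈ X ∧ β ≤ t.a := by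
      intro β
      by_cases hβ : β < lam.ord
      · obtain ⟨t, ht, hta⟩ := exists_a_ge hreg hXq hqlev hbig hβ
        exact ⟨t, fun _ => ⟨ht, hta⟩⟩
      · exact ⟨⟨0, ∅, ∅⟩, fun hc => absurd hc hβ⟩
    choose T hT using hTch
    -- the step function
    have hhch : ∀ β : Ordinal.{0}, ∃ η : Ordinal.{0}, β < lam.ord →
        β < η ∧ η < lam.ord ∧ (∀ s ∈ p, s.a ≤ β → ∀ x ∈ s.Z, x < η) ∧
          ∀ x ∈ (T β).Z, x < η := by
      intro β
      by_cases hβ : β < lam.ord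
      · have hβ1 : β + 1 < lam.ord := hsucclt β hβ
        have hScard : #(↥{s : LocalFilter | s ∈ p ∧ s.a < β + 1}) < Cardinal.lift.{1} lam :=
          card_lt_of_a_lt hreg hplev hβ1 (fun s hs => hs)
        have hZcard : #(↥(⋃ s ∈ {s : LocalFilter | s ∈ p ∧ s.a < β + 1}, s.Z))
            < Cardinal.lift.{1} lam :=
          union_Z_card_lt hreg hScard (fun s hs => fult_Zcard (hpF hs.1))
        have hTβ := hT β hβ
        have hTF : T β ∈ Fult lam := hqF (hXq hTβ.1)
        have hWlt : ∀ x ∈ (⋃ s ∈ {s : LocalFilter | s ∈ p ∧ s.a < β + 1}, s.Z) ∪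
            ((T β).Z ∪ {β}), x < lam.ord := by
          intro x hx
          rcases hx with hx | hx | hx
          · obtain ⟨s, hsS, hxs⟩ := Set.mem_iUnion₂.1 hx
            exact (fult_Zsub (hpF hsS.1) hxs).2
          · exact (fult_Zsub hTF hx).2
          · rw [Set.mem_singleton_iff] at hx; subst hx; exact hβ
        have hWcard : #(↥((⋃ s ∈ {s : LocalFilter | s ∈ p ∧ s.a < β + 1}, s.Z) ∪
            ((T β).Z ∪ {β}))) < Cardinal.lift.{1} lam := by
          have hal : ℵ₀ ≤ Cardinal.lift.{1} lam := Cardinal.aleph0_le_lift.2 hreg.1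
          refine lt_of_le_of_lt (Cardinal.mk_union_le _ _) (Cardinal.add_lt_of_lt hal hZcard ?_)
          refine lt_of_le_of_lt (Cardinal.mk_union_le _ _)
            (Cardinal.add_lt_of_lt hal (fult_Zcard hTF) ?_)
          rw [Cardinal.mk_singleton]
          exact lt_of_lt_of_le Cardinal.one_lt_aleph0 hal
        obtain ⟨η, hη, hηb⟩ := bounded_of_card_lt hreg hWlt hWcard
        refine ⟨η, fun _ => ⟨hηb β (Or.inr (Or.inr rfl)), hη, ?_, ?_⟩⟩
        · intro s hs hsa x hxs
          exact hηb x (Or.inl (Set.mem_biUnion ⟨hs, lt_of_le_of_lt hsa (hlt1 β)⟩ hxs))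
        · intro x hx
          exact hηb x (Or.inr (Or.inl hx))
      · exact ⟨0, fun hc => absurd hc hβ⟩
    choose hstep hh using hhch
    -- facts about the recursive sequence
    have key : ∀ i : Ordinal.{0}, i < lam.ord →
        deltaSeq hstep i < lam.ord ∧ ∀ j < i, deltaSeq hstep j < deltaSeq hstep i := by
      intro i
      induction i using Ordinal.induction with
      | h i IH =>
        intro hi
        have hblt : ∀ j : ↥(Set.Iio i), deltaSeq hstep j.1 < lam.ord :=
          fun j => (IH j.1 j.2 (lt_trans j.2 hi)).1
        have hbdd : BddAbove (Set.range fun j : ↥(Set.Iio i) => deltaSeq hstep j.1) :=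
          ⟨lam.ord, by rintro o ⟨j, rfl⟩; exact le_of_lt (hblt j)⟩
        have hsup : (⨆ j : ↥(Set.Iio i), deltaSeq hstep j.1) < lam.ord := by
          have hrange : ∀ x ∈ Set.range fun j : ↥(Set.Iio i) => deltaSeq hstep j.1,
              x < lam.ord := by rintro x ⟨j, rfl⟩; exact hblt j
          have hrcard : #(↥(Set.range fun j : ↥(Set.Iio i) => deltaSeq hstep j.1))
              < Cardinal.lift.{1} lam := by
            refine lt_of_le_of_lt Cardinal.mk_range_le ?_
            rw [Ordinal.mk_Iio_ordinal]
            exact Cardinal.lift_lt.2 (Cardinal.lt_ord.1 hi)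
          obtain ⟨η, hη, hηb⟩ := bounded_of_card_lt hreg hrange hrcard
          rcases isEmpty_or_nonempty ↥(Set.Iio i) with hie | hie
          · rw [ciSup_of_empty]
            exact lt_of_le_of_lt bot_le (lt_of_lt_of_le (hlt1 0) (le_of_lt (hsucclt 0 hreg.ord_pos)))
          · exact lt_of_le_of_lt (ciSup_le (fun j => le_of_lt (hηb _ ⟨j, rfl⟩))) hη
        constructor
        · rw [deltaSeq_def hstep i]
          exact (hh _ hsup).2.1
        · intro j hj
          have hle : deltaSeq hstep j ≤ ⨆ j' : ↥(Set.Iio i), deltaSeq hstep j'.1 :=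
            le_ciSup hbdd (⟨j, hj⟩ : ↥(Set.Iio i))
          rw [deltaSeq_def hstep i]
          exact lt_of_le_of_lt hle (hh _ hsup).1
    have hmono_le : ∀ j i : Ordinal.{0}, j ≤ i → i < lam.ord →
        deltaSeq hstep j ≤ deltaSeq hstep i := by
      intro j i hji hi
      rcases eq_or_lt_of_le hji with rfl | hlt
      · exact le_rfl
      · exact le_of_lt ((key i hi).2 j hlt)
    have hself : ∀ i : Ordinal.{0}, i < lam.ord → i ≤ deltaSeq hstep i := by
      intro i
      induction i using Ordinal.induction with
      | h i IH =>
        intro hi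
        by_contra hcon
        push_neg at hcon
        have h1 := IH _ hcon (lt_trans hcon hi)
        have h2 := (key i hi).2 _ hcon
        exact absurd (lt_of_le_of_lt h1 h2) (lt_irrefl _)
    have hsucc : ∀ i : Ordinal.{0}, i < lam.ord →
        deltaSeq hstep (i + 1) = hstep (deltaSeq hstep i) := by
      intro i hi
      have hi1 : i + 1 < lam.ord := hsucclt i hi
      rw [deltaSeq_def hstep (i + 1)]
      congr 1
      haveI : Nonempty ↥(Set.Iio (i + 1)) := ⟨⟨i, hlt1 i⟩⟩
      have hbdd : BddAbove (Set.range fun j : ↥(Set.Iio (i + 1)) => deltaSeq hstep j.1) := by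
        refine ⟨lam.ord, ?_⟩
        rintro o ⟨j, rfl⟩
        exact le_of_lt (key j.1 (lt_trans j.2 hi1)).1
      apply le_antisymm
      · refine ciSup_le fun j => ?_
        obtain ⟨jv, hjv⟩ := j
        have hjv' : jv < i + 1 := hjv
        rw [Ordinal.add_one_eq_succ] at hjv'
        exact hmono_le _ _ (Order.lt_succ_iff.1 hjv') hi
      · exact le_ciSup hbdd (⟨i, hlt1 i⟩ : ↥(Set.Iio (i + 1)))
    have hTmem : ∀ i : Ordinal.{0}, i < lam.ord → T (deltaSeq hstep i) ∈ X ∧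
        deltaSeq hstep i ≤ (T (deltaSeq hstep i)).a := fun i hi => hT _ (key i hi).1
    have hstepprop := fun (i : Ordinal.{0}) (hi : i < lam.ord) =>
      hh (deltaSeq hstep i) (key i hi).1
    set N : Set Ordinal.{0} := ⋃ i ∈ Set.Iio lam.ord, Aset (T (deltaSeq hstep i)) with hNdef
    set A : Set Ordinal.{0} := Set.Iio lam.ord \ N with hAdef
    have hAp : A ∈ fil lam p := by
      refine ⟨Set.diff_subset, 0, hreg.ord_pos, ?_⟩
      intro s hsp _
      have hsF : s ∈ Fult lam := hpF hsp
      have hsa : s.a < lam.ord := fult_aLt hsF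
      have hsa1 : s.a + 1 < lam.ord := hsucclt _ hsa
      have hne : (s.a : Ordinal.{0}) ∈ {i : Ordinal.{0} | s.a < deltaSeq hstep (i + 1)} :=
        lt_of_lt_of_le (hlt1 s.a) (hself _ hsa1)
      set i0 := sInf {i : Ordinal.{0} | s.a < deltaSeq hstep (i + 1)} with hi0def
      have hi0mem : s.a < deltaSeq hstep (i0 + 1) := csInf_mem ⟨_, hne⟩
      have hi0le : i0 ≤ s.a := csInf_le' hne
      have hi0lt : i0 < lam.ord := lt_of_le_of_lt hi0le hsa
      have hi01lt : i0 + 1 < lam.ord := hsucclt _ hi0lt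
      have hi02lt : i0 + 1 + 1 < lam.ord := hsucclt _ hi01lt
      have hmin : ∀ j, j < i0 → deltaSeq hstep (j + 1) ≤ s.a := by
        intro j hj
        by_contra hcon
        push_neg at hcon
        have hmemj : j ∈ {i : Ordinal.{0} | s.a < deltaSeq hstep (i + 1)} := hcon
        exact absurd (csInf_le' hmemj) (not_le.2 hj)
      have hmem0 := hTmem i0 hi0lt
      have hmem1 := hTmem (i0 + 1) hi01lt
      have hB0 : s.Z \ Aset (T (deltaSeq hstep i0)) ∈ s.F :=
        ultra_compl (fult_ultra hsF) (hAnull _ hmem0.1 s hsp)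
      have hB1 : s.Z \ Aset (T (deltaSeq hstep (i0 + 1))) ∈ s.F :=
        ultra_compl (fult_ultra hsF) (hAnull _ hmem1.1 s hsp)
      have hBmem := filt_inter (fult_ultra hsF).1 _ hB0 _ hB1
      refine filt_up (fult_ultra hsF).1 _ hBmem (A ∩ s.Z) ?_ Set.inter_subset_right
      rintro x ⟨⟨hxZ, hx0⟩, ⟨-, hx1⟩⟩
      have hxord : x < lam.ord := (fult_Zsub hsF hxZ).2
      have hxge : s.a ≤ x := (fult_Zsub hsF hxZ).1
      refine ⟨⟨hxord, ?_⟩, hxZ⟩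
      intro hxN
      obtain ⟨j, hjlt, hxj⟩ := Set.mem_iUnion₂.1 hxN
      have hjlt' : j < lam.ord := hjlt
      have hTj := hTmem j hjlt'
      have hTjF : T (deltaSeq hstep j) ∈ Fult lam := hqF (hXq hTj.1)
      have hxZj : x ∈ (T (deltaSeq hstep j)).Z :=
        filt_sub (fult_ultra hTjF).1 _ (hAmem _ hTj.1) hxj
      rcases lt_trichotomy j i0 with hj0 | rfl | hj0
      · have hxlt : x < deltaSeq hstep (j + 1) := by
          rw [hsucc j hjlt']
          exact (hstepprop j hjlt').2.2.2 x hxZj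
        exact absurd (lt_of_lt_of_le hxlt (hmin j hj0)) (not_lt.2 hxge)
      · exact hx0 hxj
      · have hj1le : i0 + 1 ≤ j := by
          rw [Ordinal.add_one_eq_succ]; exact Order.succ_le_of_lt hj0
        rcases eq_or_lt_of_le hj1le with rfl | hj1
        · exact hx1 hxj
        · have hj2le : i0 + 1 + 1 ≤ j := by
            rw [Ordinal.add_one_eq_succ (i0 + 1)]; exact Order.succ_le_of_lt hj1
          have hxlt : x < deltaSeq hstep (i0 + 1 + 1) := by
            rw [hsucc (i0 + 1) hi01lt]
            exact (hstepprop (i0 + 1) hi01lt).2.2.1 s hsp (le_of_lt hi0mem) x hxZ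
          have hd1 : deltaSeq hstep (i0 + 1 + 1) ≤ deltaSeq hstep j := hmono_le _ _ hj2le hjlt'
          have hd2 : deltaSeq hstep j ≤ (T (deltaSeq hstep j)).a := hTj.2
          have hd3 : (T (deltaSeq hstep j)).a ≤ x := (fult_Zsub hTjF hxZj).1
          exact absurd (lt_of_lt_of_le hxlt (le_trans hd1 (le_trans hd2 hd3))) (lt_irrefl x)
    obtain ⟨-, ε, hεlt, hεq⟩ := hfil hAp
    have hTε := hTmem ε hεlt
    have htq : T (deltaSeq hstep ε) ∈ q := hXq hTε.1
    have hta : ε ≤ (T (deltaSeq hstep ε)).a := le_trans (hself ε hεlt) hTε.2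
    have hmemF := hεq _ htq hta
    have hTFε : T (deltaSeq hstep ε) ∈ Fult lam := hqF htq
    have hint := filt_inter (fult_ultra hTFε).1 _ hmemF _ (hAmem _ hTε.1)
    have hempty : (A ∩ (T (deltaSeq hstep ε)).Z) ∩ Aset (T (deltaSeq hstep ε)) = ∅ := by
      apply Set.eq_empty_iff_forall_notMem.2
      rintro x ⟨⟨⟨-, hxN⟩, -⟩, hxA⟩
      exact hxN (Set.mem_biUnion hεlt hxA)
    rw [hempty] at hint
    exact filt_ne (fult_ultra hTFε).1 hint
  · -- backward direction
    intro hsmall A hA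
    obtain ⟨hAsub, ε, hεlt, hεp⟩ := hA
    have hXa : ∀ x ∈ (fun t : LocalFilter => t.a) '' (q \ SigmaP lam p), x < lam.ord := by
      rintro x ⟨t, ht, rfl⟩
      exact fult_aLt (hqF ht.1)
    obtain ⟨η1, hη1, hη1b⟩ :=
      bounded_of_card_lt hreg hXa (lt_of_le_of_lt Cardinal.mk_image_le hsmall)
    have hScard : #(↥{s : LocalFilter | s ∈ p ∧ s.a < ε}) < Cardinal.lift.{1} lam :=
      card_lt_of_a_lt hreg hplev hεlt (fun s hs => hs)
    have hZb : ∀ x ∈ ⋃ s ∈ {s : LocalFilter | s ∈ p ∧ s.a < ε}, s.Z, x < lam.ord := by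
      intro x hx
      obtain ⟨s, hsS, hxs⟩ := Set.mem_iUnion₂.1 hx
      exact (fult_Zsub (hpF hsS.1) hxs).2
    obtain ⟨η2, hη2, hη2b⟩ := bounded_of_card_lt hreg hZb
      (union_Z_card_lt hreg hScard fun s hs => fult_Zcard (hpF hs.1))
    refine ⟨hAsub, max ε (max η1 η2), max_lt hεlt (max_lt hη1 hη2), ?_⟩
    intro t htq hta
    have htF := hqF htq
    have htSig : t ∈ SigmaP lam p := by
      by_contra hns
      have hlt := hη1b t.a ⟨t, ⟨htq, hns⟩, rfl⟩
      have hge : η1 ≤ t.a :=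
        le_trans (le_trans (le_max_left η1 η2) (le_max_right ε (max η1 η2))) hta
      exact absurd hlt (not_lt.2 hge)
    by_contra hAF
    have hcompl : t.Z \ A ∈ t.F := ultra_compl (fult_ultra htF) hAF
    obtain ⟨s, hsp, hsF⟩ := htSig.2 _ hcompl
    have hsFl := (fult_ultra (hpF hsp)).1
    have hnonempty : ((t.Z \ A) ∩ s.Z).Nonempty := by
      rw [Set.nonempty_iff_ne_empty]
      intro he
      rw [he] at hsF
      exact filt_ne hsFl hsF
    obtain ⟨x, hx⟩ := hnonempty
    have hxt : t.a ≤ x := (fult_Zsub htF hx.1.1).1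
    have hεa : ε ≤ s.a := by
      by_contra hcon
      push_neg at hcon
      have hxW : x ∈ ⋃ s' ∈ {s' : LocalFilter | s' ∈ p ∧ s'.a < ε}, s'.Z :=
        Set.mem_biUnion ⟨hsp, hcon⟩ hx.2
      have h1 : x < η2 := hη2b x hxW
      have h2 : η2 ≤ t.a :=
        le_trans (le_trans (le_max_right η1 η2) (le_max_right ε (max η1 η2))) hta
      exact absurd (lt_of_lt_of_le h1 (le_trans h2 hxt)) (lt_irrefl x)
    have hAs := hεp s hsp hεa
    have hint := filt_inter hsFl _ hAs _ hsF
    have hempty : (A ∩ s.Z) ∩ ((t.Z \ A) ∩ s.Z) = ∅ := by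
      apply Set.eq_empty_iff_forall_notMem.2
      rintro y ⟨⟨hyA, -⟩, ⟨⟨-, hyA'⟩, -⟩⟩
      exact hyA' hyA
    rw [hempty] at hint
    exact filt_ne hsFl hint

end

end RS889
end

section
/- Assume 2^λ = λ⁺. Then there is a uniform ultrafilter D on λ such that fil(p) ⊄ D for every p ∈ Q*_λ(𝓕^pr); that is, D contains no fil(p) with p ∈ Q*_λ(𝓕^pr). -/
namespace RS889

noncomputable section

open Cardinal Set

universe u v

section Aux


lemma mk_Iio_ord (lam : Cardinal.{0}) : #(Set.Iio lam.ord) = Cardinal.lift.{1} lam := by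
  rw [Ordinal.mk_Iio_ordinal, Cardinal.card_ord]

lemma isRegular_lift {lam : Cardinal.{0}} (hreg : lam.IsRegular) :
    (Cardinal.lift.{1} lam).IsRegular := by
  constructor
  · simpa using hreg.1
  · rw [← Cardinal.lift_ord, ← Ordinal.lift_cof]
    exact Cardinal.lift_le.2 hreg.2

lemma bddOf {lam : Cardinal.{0}} (hreg : lam.IsRegular) {S : Set Ordinal.{0}}
    (hS : S ⊆ Set.Iio lam.ord) (hc : #S < Cardinal.lift.{1} lam) :
    ∃ β < lam.ord, ∀ x ∈ S, x < β := by
  haveI : IsWellOrder lam.ord.ToType (· < ·) := isWellOrder_lt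
  by_contra h
  push_neg at h
  -- S is unbounded in Iio lam.ord
  set j := Ordinal.ToType.mk (o := lam.ord)
  set S₀ : Set lam.ord.ToType := {w | (j.symm w : Ordinal) ∈ S}
  have hub : Unbounded (· < ·) S₀ := by
    intro w
    obtain ⟨x, hxS, hx⟩ := h (j.symm w) (j.symm w).2
    refine ⟨j ⟨x, hS hxS⟩, by simp [S₀, hxS], ?_⟩
    rw [not_lt, ← j.symm.le_iff_le]
    simpa using (show j.symm w ≤ ⟨x, hS hxS⟩ from hx)
  have hcof : lam ≤ #S₀ := by
    have h0 := Order.cof_le (s := S₀) (fun a => (hub a).imp fun b hb => ⟨hb.1, not_lt.1 hb.2⟩)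
    rw [Ordinal.cof_toType] at h0
    exact hreg.2.trans h0
  have hinj : lift.{1} lam ≤ #S := by
    have : Nonempty (S₀ ↪ S) :=
      ⟨⟨fun w => ⟨(j.symm w.1 : Ordinal), w.2⟩, by
        intro a b hab
        apply Subtype.ext
        apply j.symm.injective
        apply Subtype.ext
        exact Subtype.mk_eq_mk.1 hab⟩⟩
    have h2 := Cardinal.lift_mk_le'.2 this
    calc Cardinal.lift.{1} lam ≤ Cardinal.lift.{1} #S₀ := Cardinal.lift_le.2 hcof
      _ ≤ Cardinal.lift.{0} #S := h2
      _ = #S := Cardinal.lift_uzero _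
  exact absurd hc (not_lt.2 hinj)

lemma unbddOf {lam : Cardinal.{0}} (hreg : lam.IsRegular) {B : Set Ordinal.{0}}
    (hB : B ⊆ Set.Iio lam.ord) (hc : #B = Cardinal.lift.{1} lam) :
    ∀ β < lam.ord, ∃ x ∈ B, β ≤ x := by
  intro β hβ
  by_contra h
  push_neg at h
  have hsub : B ⊆ Set.Iio β := fun x hx => h x hx
  have : #B < Cardinal.lift.{1} lam := by
    calc #B ≤ #(Set.Iio β) := Cardinal.mk_le_mk_of_subset hsub
      _ = Cardinal.lift.{1} β.card := Ordinal.mk_Iio_ordinal β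
      _ < Cardinal.lift.{1} lam := Cardinal.lift_lt.2 (Cardinal.lt_ord.1 hβ)
  exact absurd hc this.ne


lemma smallA {lam : Cardinal.{0}} (hreg : lam.IsRegular) {p : Set LocalFilter}
    (hp : ∀ ξ : Ordinal.{0}, #{t | t ∈ p ∧ t.a = ξ} < Cardinal.lift.{1} lam)
    {γ : Ordinal.{0}} (hγ : γ < lam.ord) :
    #{t | t ∈ p ∧ t.a ≤ γ} < Cardinal.lift.{1} lam := by
  have hcov : {t | t ∈ p ∧ t.a ≤ γ} ⊆ ⋃ ξ : ↥(Set.Iic γ), {t | t ∈ p ∧ t.a = ξ.1} := by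
    rintro t ⟨ht, hle⟩; exact Set.mem_iUnion.2 ⟨⟨t.a, hle⟩, ht, rfl⟩
  have hι : #↥(Set.Iic γ) < Cardinal.lift.{1} lam := by
    refine lt_of_le_of_lt (Cardinal.mk_le_mk_of_subset (Order.Iic_subset_Iio_succ γ)) ?_
    rw [Ordinal.mk_Iio_ordinal]
    refine Cardinal.lift_lt.2 (Cardinal.lt_ord.1 ?_)
    exact (Cardinal.isSuccLimit_ord hreg.1).succ_lt hγ
  have h1 : #(⋃ ξ : ↥(Set.Iic γ), {t | t ∈ p ∧ t.a = ξ.1}) < Cardinal.lift.{1} lam := by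
    refine lt_of_le_of_lt (Cardinal.mk_iUnion_le _) ?_
    exact Cardinal.mul_lt_of_lt (isRegular_lift hreg).1 hι
      (Cardinal.iSup_lt_of_isRegular (isRegular_lift hreg) hι (fun ξ => hp ξ.1))
  exact lt_of_le_of_lt (Cardinal.mk_le_mk_of_subset hcov) h1

open scoped Classical in
/-- A choice of pararegularity data for a triple. -/
noncomputable def prData (lam : Cardinal.{0}) (t : LocalFilter) :
    Cardinal.{0} × (Finset Ordinal.{0} → Set Ordinal.{0}) :=
  if h : Pararegular lam t.F t.Z t.a then
    ⟨h.choose, h.choose_spec.2.2.choose⟩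
  else ⟨0, fun _ => ∅⟩

lemma prData_spec {lam : Cardinal.{0}} {t : LocalFilter}
    (h : Pararegular lam t.F t.Z t.a) :
    (Ordinal.omega0 + t.a).card ≤ (prData lam t).1 ∧ (prData lam t).1 < lam ∧
    (∀ u : Finset Ordinal.{0}, ↑u ⊆ Set.Iio (prData lam t).1.ord →
      (prData lam t).2 u ∈ t.F) ∧
    (∀ U : Set Ordinal.{0}, U ⊆ Set.Iio (prData lam t).1.ord → U.Infinite →
      (⋂ ξ ∈ U, (prData lam t).2 {ξ}) = ∅) ∧
    t.F = {B | B ⊆ t.Z ∧ ∃ u : Finset Ordinal.{0}, ↑u ⊆ Set.Iio (prData lam t).1.ord ∧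
      (prData lam t).2 u ⊆ B} := by
  classical
  rw [prData, dif_pos h]
  have c := h.choose_spec.2.2.choose_spec
  exact ⟨h.choose_spec.1, h.choose_spec.2.1, c.1, c.2.2.1, c.2.2.2⟩

/-- A recursively defined diagonal sequence. -/
noncomputable def zseq (p : Set LocalFilter) (Bf : Ordinal.{0} → Set Ordinal.{0}) :
    Ordinal.{0} → Ordinal.{0} :=
  WellFounded.fix Ordinal.lt_wf
    (fun ι ih => sInf {x | x ∈ Bf ι ∧ ∀ j, ∀ hj : j < ι,
      ih j hj < x ∧ ∀ t ∈ p, t.a ≤ ih j hj → ∀ y ∈ t.Z, y < x})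

lemma zseq_eq (p : Set LocalFilter) (Bf : Ordinal.{0} → Set Ordinal.{0}) (ι : Ordinal.{0}) :
    zseq p Bf ι = sInf {x | x ∈ Bf ι ∧ ∀ j, j < ι →
      (zseq p Bf j < x ∧ ∀ t ∈ p, t.a ≤ zseq p Bf j → ∀ y ∈ t.Z, y < x)} := by
  rw [zseq, WellFounded.fix_eq]

lemma key_lemma {lam : Cardinal.{0}} (hreg : lam.IsRegular)
    {p : Set LocalFilter} (hp : p ∈ Qstar lam (Fpr lam))
    (B : ↥(Set.Iio lam.ord) → Set Ordinal.{0})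
    (hB : ∀ i, B i ⊆ Set.Iio lam.ord ∧ #(B i) = Cardinal.lift.{1} lam) :
    ∃ A ∈ fil lam p, ∀ i, #↥(B i \ A) = Cardinal.lift.{1} lam := by
  obtain ⟨hsub, _hcard, hfib⟩ := hp
  have hlam0 : (0 : Ordinal.{0}) < lam.ord := by
    rw [Cardinal.lt_ord, Ordinal.card_zero]; exact hreg.pos
  -- a pairing equivalence
  have he2 : Nonempty (↥(Set.Iio lam.ord) ≃ (↥(Set.Iio lam.ord) × ↥(Set.Iio lam.ord))) := by
    apply Cardinal.eq.1
    simp only [Cardinal.mk_prod, Cardinal.lift_id, mk_Iio_ord]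
    rw [Cardinal.mul_eq_self (by simpa using hreg.1)]
  obtain ⟨e2⟩ := he2
  set f' : Ordinal.{0} → ↥(Set.Iio lam.ord) :=
    fun ι => if h : ι < lam.ord then (e2 ⟨ι, h⟩).1 else (e2 ⟨0, hlam0⟩).1 with hf'
  set Bf : Ordinal.{0} → Set Ordinal.{0} := fun ι => B (f' ι) with hBf
  set z : Ordinal.{0} → Ordinal.{0} := zseq p Bf with hz
  -- main invariant
  have hzmem : ∀ ι, ι < lam.ord →
      z ι ∈ Bf ι ∧ ∀ j, j < ι →
        (z j < z ι ∧ ∀ t ∈ p, t.a ≤ z j → ∀ y ∈ t.Z, y < z ι) := by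
    intro ι
    induction ι using Ordinal.induction with
    | h ι IH =>
      intro hι
      have hS1 : z '' (Set.Iio ι) ⊆ Set.Iio lam.ord := by
        rintro _ ⟨j, hj, rfl⟩
        exact (hB (f' j)).1 ((IH j hj (lt_trans hj hι)).1)
      have hS1c : #(z '' (Set.Iio ι)) < Cardinal.lift.{1} lam := by
        refine lt_of_le_of_lt Cardinal.mk_image_le ?_
        rw [Ordinal.mk_Iio_ordinal]
        exact Cardinal.lift_lt.2 (Cardinal.lt_ord.1 hι)
      obtain ⟨β₁, hβ₁l, hβ₁⟩ := bddOf hreg hS1 hS1c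
      have hTs : #{t | t ∈ p ∧ t.a ≤ β₁} < Cardinal.lift.{1} lam := smallA hreg hfib hβ₁l
      have hZbd : ∀ t, t ∈ p → ∃ β, β < lam.ord ∧ ∀ y ∈ t.Z, y < β := by
        intro t ht
        obtain ⟨β, hβ1, hβ2⟩ := bddOf hreg (hsub ht).2.1 (hsub ht).2.2.1
        exact ⟨β, hβ1, hβ2⟩
      choose! g hgl hg using hZbd
      have hgs : g '' {t | t ∈ p ∧ t.a ≤ β₁} ⊆ Set.Iio lam.ord := by
        rintro _ ⟨t, ht, rfl⟩; exact hgl t ht.1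
      have hgsc : #(g '' {t | t ∈ p ∧ t.a ≤ β₁}) < Cardinal.lift.{1} lam :=
        lt_of_le_of_lt Cardinal.mk_image_le hTs
      obtain ⟨β₂, hβ₂l, hβ₂⟩ := bddOf hreg hgs hgsc
      obtain ⟨x, hxB, hx⟩ := unbddOf hreg (hB (f' ι)).1 (hB (f' ι)).2 (max β₁ β₂)
        (max_lt hβ₁l hβ₂l)
      have hne : {x | x ∈ Bf ι ∧ ∀ j, j < ι →
          (z j < x ∧ ∀ t ∈ p, t.a ≤ z j → ∀ y ∈ t.Z, y < x)}.Nonempty := by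
        refine ⟨x, hxB, ?_⟩
        intro j hj
        have hzj : z j < β₁ := hβ₁ _ (Set.mem_image_of_mem _ hj)
        refine ⟨lt_of_lt_of_le (lt_of_lt_of_le hzj (le_max_left _ _)) hx, ?_⟩
        intro t ht hta y hy
        have htT : t ∈ {t | t ∈ p ∧ t.a ≤ β₁} := ⟨ht, hta.trans hzj.le⟩
        calc y < g t := hg t ht y hy
          _ < β₂ := hβ₂ _ (Set.mem_image_of_mem _ htT)
          _ ≤ max β₁ β₂ := le_max_right _ _
          _ ≤ x := hx
      have hmem : z ι ∈ {x | x ∈ Bf ι ∧ ∀ j, j < ι →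
          (z j < x ∧ ∀ t ∈ p, t.a ≤ z j → ∀ y ∈ t.Z, y < x)} := by
        rw [hz, zseq_eq]
        exact csInf_mem hne
      exact ⟨hmem.1, hmem.2⟩
  have hzinj : ∀ j ι, j < ι → ι < lam.ord → z j < z ι :=
    fun j ι hj hι => ((hzmem ι hι).2 j hj).1
  have hone : ∀ t ∈ p, ∀ j ι, j < ι → ι < lam.ord → z j ∈ t.Z → z ι ∉ t.Z := by
    intro t ht j ι hj hι hzj hzι
    have hta : t.a ≤ z j := (hsub ht).2.2.2.1.2 hzj
    exact lt_irrefl _ (((hzmem ι hι).2 j hj).2 t ht hta (z ι) hzι)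
  -- choose good ξ's
  have hxi : ∀ t, t ∈ p → ∃ ξ, ξ < (prData lam t).1.ord ∧
      ¬ ∃ ι, ι < lam.ord ∧ z ι ∈ (prData lam t).2 {ξ} := by
    intro t ht
    obtain ⟨hk1, hk2, hA1, hA3, hA4⟩ := prData_spec (hsub ht).2.2.2.2.2
    have hkale : ℵ₀ ≤ (prData lam t).1 := by
      refine le_trans ?_ hk1
      have h1 : (Ordinal.omega0 : Ordinal.{0}).card ≤ (Ordinal.omega0 + t.a).card :=
        Ordinal.card_le_card le_self_add
      rwa [Ordinal.card_omega0] at h1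
    have hkinf : Ordinal.omega0 ≤ (prData lam t).1.ord := by
      rw [← Cardinal.ord_aleph0]
      exact Cardinal.ord_le_ord.2 hkale
    by_contra hcon
    push_neg at hcon
    have hAZ : ∀ ξ, ξ < (prData lam t).1.ord → (prData lam t).2 {ξ} ⊆ t.Z := by
      intro ξ hξ
      have hmem : (prData lam t).2 {ξ} ∈ t.F := hA1 {ξ} (by simpa using hξ)
      rw [hA4] at hmem; exact hmem.1
    obtain ⟨ι₀, hι₀, hzι₀⟩ := hcon 0 (lt_of_lt_of_le Ordinal.omega0_pos hkinf)
    have hzZ : z ι₀ ∈ t.Z := hAZ 0 (lt_of_lt_of_le Ordinal.omega0_pos hkinf) hzι₀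
    have hall : ∀ ξ, ξ < (prData lam t).1.ord → z ι₀ ∈ (prData lam t).2 {ξ} := by
      intro ξ hξ
      obtain ⟨ι, hι, hzι⟩ := hcon ξ hξ
      have hzZι : z ι ∈ t.Z := hAZ ξ hξ hzι
      rcases lt_trichotomy ι ι₀ with h | h | h
      · exact absurd hzZ (hone t ht ι ι₀ h hι₀ hzZι)
      · rwa [← h]
      · exact absurd hzZι (hone t ht ι₀ ι h hι hzZ)
    have hUinf : (Set.Iio (prData lam t).1.ord).Infinite := by
      rw [← Set.infinite_coe_iff]
      refine Cardinal.infinite_iff.2 ?_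
      rw [Ordinal.mk_Iio_ordinal, Cardinal.card_ord]
      exact Cardinal.aleph0_le_lift.2 hkale
    have hempty := hA3 (Set.Iio (prData lam t).1.ord) (subset_refl _) hUinf
    have hzin : z ι₀ ∈ ⋂ ξ ∈ Set.Iio (prData lam t).1.ord, (prData lam t).2 {ξ} := by
      simp only [Set.mem_iInter]
      exact fun ξ hξ => hall ξ hξ
    rw [hempty] at hzin
    exact hzin
  choose! ξs hξs1 hξs2 using hxi
  refine ⟨⋃ t ∈ p, (prData lam t).2 {ξs t}, ?_, ?_⟩
  · constructor
    · intro x hx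
      simp only [Set.mem_iUnion] at hx
      obtain ⟨t, ht, hxt⟩ := hx
      obtain ⟨_, _, hA1, _, hA4⟩ := prData_spec (hsub ht).2.2.2.2.2
      have hmem : (prData lam t).2 {ξs t} ∈ t.F := hA1 {ξs t} (by simpa using hξs1 t ht)
      rw [hA4] at hmem
      exact (hsub ht).2.1 (hmem.1 hxt)
    · refine ⟨0, hlam0, ?_⟩
      intro t ht _
      obtain ⟨_, _, hA1, _, hA4⟩ := prData_spec (hsub ht).2.2.2.2.2
      have hmem : (prData lam t).2 {ξs t} ∈ t.F := hA1 {ξs t} (by simpa using hξs1 t ht)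
      have hsubZ : (prData lam t).2 {ξs t} ⊆ t.Z := by rw [hA4] at hmem; exact hmem.1
      rw [hA4]
      refine ⟨Set.inter_subset_right, {ξs t}, by simpa using hξs1 t ht, ?_⟩
      refine Set.subset_inter ?_ hsubZ
      exact Set.subset_biUnion_of_mem (u := fun t => (prData lam t).2 {ξs t}) ht
  · intro i
    set W : Set Ordinal.{0} := {ι | ι < lam.ord ∧ f' ι = i} with hW
    have hWeq : W = Subtype.val '' {s : ↥(Set.Iio lam.ord) | (e2 s).1 = i} := by
      ext ι
      constructor
      · rintro ⟨hι, hfeq⟩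
        refine ⟨⟨ι, hι⟩, ?_, rfl⟩
        show (e2 ⟨ι, hι⟩).1 = i
        have h5 : f' ι = (e2 ⟨ι, hι⟩).1 := dif_pos hι
        rw [← h5]; exact hfeq
      · rintro ⟨s, hs, rfl⟩
        refine ⟨s.2, ?_⟩
        have h5 : f' s.1 = (e2 ⟨s.1, s.2⟩).1 := dif_pos s.2
        rw [h5]
        exact hs
    have hfibc : #{s : ↥(Set.Iio lam.ord) | (e2 s).1 = i} = Cardinal.lift.{1} lam := by
      have e3 : {s : ↥(Set.Iio lam.ord) | (e2 s).1 = i} ≃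
          {q : ↥(Set.Iio lam.ord) × ↥(Set.Iio lam.ord) | q.1 = i} :=
        e2.subtypeEquiv (fun s => Iff.rfl)
      have e4 : {q : ↥(Set.Iio lam.ord) × ↥(Set.Iio lam.ord) | q.1 = i} ≃
          ↥(Set.Iio lam.ord) := by
        refine ⟨fun q => q.1.2, fun y => ⟨(i, y), rfl⟩, ?_, ?_⟩
        · rintro ⟨⟨q1, q2⟩, hq⟩
          simp only [Set.mem_setOf_eq] at hq
          subst hq; rfl
        · intro y; rfl
      rw [Cardinal.mk_congr (e3.trans e4), mk_Iio_ord]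
    have himg : z '' W ⊆ B i \ ⋃ t ∈ p, (prData lam t).2 {ξs t} := by
      rintro _ ⟨ι, ⟨hι, hfeq⟩, rfl⟩
      constructor
      · have h0 := (hzmem ι hι).1
        rw [hBf] at h0
        simp only at h0
        rwa [hfeq] at h0
      · intro hzA
        simp only [Set.mem_iUnion] at hzA
        obtain ⟨t, ht, hzt⟩ := hzA
        exact hξs2 t ht ⟨ι, hι, hzt⟩
    have hinjW : Set.InjOn z W := by
      intro a ha b hb hab
      rcases lt_trichotomy a b with h | h | h
      · exact absurd hab (ne_of_lt (hzinj a b h hb.1))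
      · exact h
      · exact absurd hab.symm (ne_of_lt (hzinj b a h ha.1))
    have h1 : #(z '' W) = Cardinal.lift.{1} lam := by
      rw [Cardinal.mk_image_eq_of_injOn _ _ hinjW, hWeq,
        Cardinal.mk_image_eq Subtype.val_injective, hfibc]
    apply le_antisymm
    · refine le_trans (Cardinal.mk_le_mk_of_subset ?_) (le_of_eq (mk_Iio_ord lam))
      exact subset_trans Set.diff_subset (hB i).1
    · rw [← h1]
      exact Cardinal.mk_le_mk_of_subset himg

lemma LF_ext {t1 t2 : LocalFilter} (h1 : t1.a = t2.a) (h2 : t1.Z = t2.Z)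
    (h3 : t1.F = t2.F) : t1 = t2 := by
  cases t1
  cases t2
  rw [LocalFilter.mk.injEq]
  exact ⟨h1, h2, h3⟩

lemma twoL {lam : Cardinal.{0}} (h2 : (2 : Cardinal.{0}) ^ lam = Order.succ lam) :
    (2 : Cardinal.{1}) ^ (Cardinal.lift.{1} lam) = Cardinal.lift.{1} (Order.succ lam) := by
  rw [← h2, ← Cardinal.lift_two_power]

lemma decode_F {lam : Cardinal.{0}} {t : LocalFilter} (ht : t ∈ Fpr lam) :
    t.F = {Bs : Set Ordinal.{0} | Bs ⊆ t.Z ∧ ∃ u : Finset ↥(Set.Iio lam.ord),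
      ↑(Finset.image Subtype.val u) ⊆ Set.Iio (prData lam t).1.ord ∧
      Subtype.val '' ((Subtype.val : ↥(Set.Iio lam.ord) → Ordinal.{0}) ⁻¹'
        ((prData lam t).2 (Finset.image Subtype.val u))) ⊆ Bs} := by
  obtain ⟨hk1, hk2, hA1, hA3, hA4⟩ := prData_spec ht.2.2.2.2.2
  have hordle : Set.Iio (prData lam t).1.ord ⊆ Set.Iio lam.ord :=
    fun x hx => lt_of_lt_of_le hx (Cardinal.ord_le_ord.2 hk2.le)
  have hFZ : ∀ Bs ∈ t.F, Bs ⊆ t.Z := fun Bs hBs => by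
    rw [hA4] at hBs; exact hBs.1
  ext Bs
  constructor
  · intro hBs
    have hBZ := hFZ Bs hBs
    rw [hA4] at hBs
    obtain ⟨_, u', hu', hsubB⟩ := hBs
    refine ⟨hBZ, Finset.image
      (fun x : {x // x ∈ u'} => (⟨x.1, hordle (hu' x.2)⟩ : ↥(Set.Iio lam.ord)))
      u'.attach, ?_⟩
    have himg : Finset.image Subtype.val (Finset.image
        (fun x : {x // x ∈ u'} => (⟨x.1, hordle (hu' x.2)⟩ : ↥(Set.Iio lam.ord)))
        u'.attach) = u' := by
      ext y
      constructor
      · intro hy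
        rw [Finset.mem_image] at hy
        obtain ⟨s, hs, rfl⟩ := hy
        rw [Finset.mem_image] at hs
        obtain ⟨x, _, rfl⟩ := hs
        exact x.2
      · intro hy
        rw [Finset.mem_image]
        exact ⟨⟨y, hordle (hu' hy)⟩,
          Finset.mem_image.2 ⟨⟨y, hy⟩, Finset.mem_attach _ _, rfl⟩, rfl⟩
    rw [himg]
    refine ⟨hu', ?_⟩
    have hsubI : (prData lam t).2 u' ⊆ Set.Iio lam.ord := by
      have := hA1 u' hu'
      rw [hA4] at this
      exact subset_trans this.1 ht.2.1
    rw [Set.image_preimage_eq_of_subset (by rwa [Subtype.range_coe])]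
    exact hsubB
  · rintro ⟨hBZ, u, hu, hsubB⟩
    rw [hA4]
    refine ⟨hBZ, Finset.image Subtype.val u, hu, ?_⟩
    have hsubI : (prData lam t).2 (Finset.image Subtype.val u) ⊆ Set.Iio lam.ord := by
      have := hA1 _ hu
      rw [hA4] at this
      exact subset_trans this.1 ht.2.1
    rwa [Set.image_preimage_eq_of_subset (by rwa [Subtype.range_coe])] at hsubB

lemma mk_FprSub {lam : Cardinal.{0}} (hreg : lam.IsRegular)
    (h2 : (2 : Cardinal.{0}) ^ lam = Order.succ lam) :
    #{t : LocalFilter // t ∈ Fpr lam} ≤ Cardinal.lift.{1} (Order.succ lam) := by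
  classical
  set σ := ↥(Set.Iio lam.ord)
  set C := σ × Set σ × σ × (Finset σ → Set σ) with hC
  have hCenc : ∃ f : {t : LocalFilter // t ∈ Fpr lam} → C, Function.Injective f := by
    have ha : ∀ q : {t : LocalFilter // t ∈ Fpr lam}, q.1.a < lam.ord :=
      fun q => q.2.2.1 q.2.2.2.2.1.1
    have hk : ∀ q : {t : LocalFilter // t ∈ Fpr lam},
        (prData lam q.1).1.ord < lam.ord :=
      fun q => Cardinal.ord_lt_ord.2 (prData_spec q.2.2.2.2.2.2).2.1
    refine ⟨fun q => ⟨⟨q.1.a, ha q⟩, Subtype.val ⁻¹' q.1.Z,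
      ⟨(prData lam q.1).1.ord, hk q⟩,
      fun u => if ↑(Finset.image Subtype.val u) ⊆ Set.Iio (prData lam q.1).1.ord
        then Subtype.val ⁻¹' ((prData lam q.1).2 (Finset.image Subtype.val u))
        else ∅⟩, ?_⟩
    rintro ⟨t1, h1⟩ ⟨t2, h2t⟩ heq
    dsimp only at heq
    have hea : t1.a = t2.a := congrArg (fun c : C => (c.1 : Ordinal.{0})) heq
    have heZ := congrArg (fun c : C => c.2.1) heq
    have hek : (prData lam t1).1.ord = (prData lam t2).1.ord :=
      congrArg (fun c : C => (c.2.2.1 : Ordinal.{0})) heq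
    have heA := congrArg (fun c : C => c.2.2.2) heq
    dsimp only at heZ heA
    have hZ : t1.Z = t2.Z := by
      ext x
      constructor
      · intro hx
        have hx' : (⟨x, h1.2.1 hx⟩ : σ) ∈ Subtype.val ⁻¹' t1.Z := hx
        rw [heZ] at hx'
        exact hx'
      · intro hx
        have hx' : (⟨x, h2t.2.1 hx⟩ : σ) ∈ Subtype.val ⁻¹' t2.Z := hx
        rw [← heZ] at hx'
        exact hx'
    have hF : t1.F = t2.F := by
      rw [decode_F h1, decode_F h2t, hZ, hek]
      ext Bs
      constructor
      · rintro ⟨hB1, u, hu1, hu2⟩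
        refine ⟨hB1, u, hu1, ?_⟩
        have := congrFun heA u
        rw [if_pos hu1] at this
        rw [hek] at this
        rw [if_pos hu1] at this
        rwa [← this]
      · rintro ⟨hB1, u, hu1, hu2⟩
        refine ⟨hB1, u, hu1, ?_⟩
        have := congrFun heA u
        rw [if_pos hu1] at this
        rw [hek] at this
        rw [if_pos hu1] at this
        rwa [this]
    exact Subtype.ext (LF_ext hea hZ hF)
  obtain ⟨f, hf⟩ := hCenc
  have hσ : #σ = Cardinal.lift.{1} lam := mk_Iio_ord lam
  have hinf : ℵ₀ ≤ (2 : Cardinal.{1}) ^ (Cardinal.lift.{1} lam) := by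
    refine le_trans ?_ (Cardinal.cantor _).le
    simpa using hreg.1
  have hCcard : #C ≤ (2 : Cardinal.{1}) ^ (Cardinal.lift.{1} lam) := by
    have hset : #(Set σ) = (2 : Cardinal.{1}) ^ (Cardinal.lift.{1} lam) := by
      rw [Cardinal.mk_set, hσ]
    have hfin : #(Finset σ) = Cardinal.lift.{1} lam := by
      have : Infinite σ := by
        rw [Cardinal.infinite_iff, hσ]
        simpa using hreg.1
      rw [Cardinal.mk_finset_of_infinite, hσ]
    have harrow : #(Finset σ → Set σ) ≤ (2 : Cardinal.{1}) ^ (Cardinal.lift.{1} lam) := by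
      rw [← Cardinal.power_def, hset, hfin, ← Cardinal.power_mul,
        Cardinal.mul_eq_self (by simpa using hreg.1)]
    have hσle : #σ ≤ (2 : Cardinal.{1}) ^ (Cardinal.lift.{1} lam) := by
      rw [hσ]; exact (Cardinal.cantor _).le
    rw [hC]
    calc #(σ × Set σ × σ × (Finset σ → Set σ))
        = #σ * (#(Set σ) * (#σ * #(Finset σ → Set σ))) := by
          simp [Cardinal.mk_prod]
      _ ≤ ((2 : Cardinal.{1}) ^ (Cardinal.lift.{1} lam)) *
          (((2 : Cardinal.{1}) ^ (Cardinal.lift.{1} lam)) *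
          (((2 : Cardinal.{1}) ^ (Cardinal.lift.{1} lam)) *
          ((2 : Cardinal.{1}) ^ (Cardinal.lift.{1} lam)))) := by
          refine mul_le_mul' hσle (mul_le_mul' hset.le
            (mul_le_mul' hσle harrow))
      _ = (2 : Cardinal.{1}) ^ (Cardinal.lift.{1} lam) := by
          rw [Cardinal.mul_eq_self hinf, Cardinal.mul_eq_self hinf,
            Cardinal.mul_eq_self hinf]
  refine le_trans (le_trans (Cardinal.mk_le_of_injective hf) hCcard) ?_
  rw [twoL h2]

lemma mk_QstarSub {lam : Cardinal.{0}} (hreg : lam.IsRegular)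
    (h2 : (2 : Cardinal.{0}) ^ lam = Order.succ lam) :
    #{p : Set LocalFilter // p ∈ Qstar lam (Fpr lam)} ≤
      Cardinal.lift.{1} (Order.succ lam) := by
  classical
  set σ := ↥(Set.Iio lam.ord)
  have hchoice : ∀ q : {p : Set LocalFilter // p ∈ Qstar lam (Fpr lam)},
      Nonempty (σ ≃ ↥q.1) := by
    intro q
    apply Cardinal.eq.1
    rw [mk_Iio_ord, q.2.2.1]
  set F : {p : Set LocalFilter // p ∈ Qstar lam (Fpr lam)} →
      (σ → {t : LocalFilter // t ∈ Fpr lam}) :=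
    fun q s => ⟨(((hchoice q).some) s).1, q.2.1 (((hchoice q).some) s).2⟩ with hFdef
  have hrange : ∀ q, q.1 = Set.range (fun s => ((F q s : LocalFilter))) := by
    intro q
    ext t
    constructor
    · intro ht
      exact ⟨((hchoice q).some).symm ⟨t, ht⟩, by simp [hFdef]⟩
    · rintro ⟨s, rfl⟩
      exact (((hchoice q).some) s).2
  have hinj : Function.Injective F := by
    intro q1 q2 heq
    apply Subtype.ext
    rw [hrange q1, hrange q2, heq]
  refine le_trans (Cardinal.mk_le_of_injective hinj) ?_
  rw [← Cardinal.power_def]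
  calc #{t : LocalFilter // t ∈ Fpr lam} ^ #σ
      ≤ (Cardinal.lift.{1} (Order.succ lam)) ^ #σ :=
        Cardinal.power_le_power_right (mk_FprSub hreg h2)
    _ = Cardinal.lift.{1} (Order.succ lam) := by
        rw [mk_Iio_ord, ← twoL h2, ← Cardinal.power_mul,
          Cardinal.mul_eq_self (by simpa using hreg.1)]

/-! ### The transfinite construction -/

/-- Tasks: either decide a subset of `lam`, or kill a `fil(p)`. -/
def TaskT (lam : Cardinal.{0}) : Type 1 :=
  {X : Set Ordinal.{0} // X ⊆ Set.Iio lam.ord} ⊕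
  {p : Set LocalFilter // p ∈ Qstar lam (Fpr lam)}

def cbSet (lam : Cardinal.{0}) (β : Ordinal.{0}) : Set Ordinal.{0} :=
  Set.Iio lam.ord \ Set.Iio β

def baseG (lam : Cardinal.{0}) : Set (Set Ordinal.{0}) :=
  {A | ∃ β < lam.ord, A = cbSet lam β}

def big (lam : Cardinal.{0}) (X : Set Ordinal.{0}) : Prop :=
  #X = Cardinal.lift.{1} lam

def FIB (lam : Cardinal.{0}) (P : Set (Set Ordinal.{0})) : Prop :=
  ∀ s : Set (Set Ordinal.{0}), s ⊆ P → s.Finite →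
    big lam (Set.Iio lam.ord ∩ ⋂₀ s)

def handles (lam : Cardinal.{0}) (T : TaskT lam) (S : Set Ordinal.{0}) : Prop :=
  match T with
  | Sum.inl X => S = X.1 ∨ S = Set.Iio lam.ord \ X.1
  | Sum.inr pp => ∃ A ∈ fil lam pp.1, S = Set.Iio lam.ord \ A

def goodS (lam : Cardinal.{0}) (T : TaskT lam) (P : Set (Set Ordinal.{0}))
    (S : Set Ordinal.{0}) : Prop :=
  S ⊆ Set.Iio lam.ord ∧ handles lam T S ∧
    ∀ s : Set (Set Ordinal.{0}), s ⊆ P → s.Finite →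
      big lam ((Set.Iio lam.ord ∩ ⋂₀ s) ∩ S)

open scoped Classical in
noncomputable def pick (lam : Cardinal.{0}) (T : TaskT lam)
    (P : Set (Set Ordinal.{0})) : Set Ordinal.{0} :=
  if h : ∃ S, goodS lam T P S then h.choose else Set.Iio lam.ord

lemma pick_cases (lam : Cardinal.{0}) (T : TaskT lam) (P : Set (Set Ordinal.{0})) :
    goodS lam T P (pick lam T P) ∨ pick lam T P = Set.Iio lam.ord := by
  classical
  rw [pick]
  split
  · next h => exact Or.inl h.choose_spec
  · exact Or.inr rfl

lemma pick_good (lam : Cardinal.{0}) (T : TaskT lam) (P : Set (Set Ordinal.{0}))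
    (h : ∃ S, goodS lam T P S) : goodS lam T P (pick lam T P) := by
  classical
  rw [pick, dif_pos h]
  exact h.choose_spec

noncomputable def addl (lam : Cardinal.{0}) (task : Ordinal.{1} → TaskT lam) :
    Ordinal.{1} → Set Ordinal.{0} :=
  WellFounded.fix Ordinal.lt_wf
    (fun i ih => pick lam (task i)
      (baseG lam ∪ {A | ∃ j, ∃ hj : j < i, A = ih j hj}))

def Gset (lam : Cardinal.{0}) (task : Ordinal.{1} → TaskT lam) (i : Ordinal.{1}) :
    Set (Set Ordinal.{0}) :=
  baseG lam ∪ {A | ∃ j, j < i ∧ A = addl lam task j}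

def Hset (lam : Cardinal.{0}) (task : Ordinal.{1} → TaskT lam) (i : Ordinal.{1}) :
    Set (Set Ordinal.{0}) :=
  baseG lam ∪ {A | ∃ j, j ≤ i ∧ A = addl lam task j}

lemma addl_eq (lam : Cardinal.{0}) (task : Ordinal.{1} → TaskT lam) (i : Ordinal.{1}) :
    addl lam task i = pick lam (task i) (Gset lam task i) := by
  conv_lhs => rw [addl, WellFounded.fix_eq]
  refine congrArg (pick lam (task i)) ?_
  rw [Gset]
  ext A
  simp only [Set.mem_union, Set.mem_setOf_eq, addl]
  constructor
  · rintro (h | ⟨j, hj, hA⟩)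
    · exact Or.inl h
    · exact Or.inr ⟨j, hj, hA⟩
  · rintro (h | ⟨j, hj, hA⟩)
    · exact Or.inl h
    · exact Or.inr ⟨j, hj, hA⟩

lemma big_mono {lam : Cardinal.{0}} {X Y : Set Ordinal.{0}} (hXY : X ⊆ Y)
    (hY : Y ⊆ Set.Iio lam.ord) (hX : big lam X) : big lam Y := by
  refine le_antisymm ?_ ?_
  · rw [← mk_Iio_ord lam]; exact Cardinal.mk_le_mk_of_subset hY
  · rw [← hX]; exact Cardinal.mk_le_mk_of_subset hXY

lemma big_cb {lam : Cardinal.{0}} (hreg : lam.IsRegular) {β : Ordinal.{0}}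
    (hβ : β < lam.ord) : big lam (cbSet lam β) := by
  have hsub : cbSet lam β ⊆ Set.Iio lam.ord := Set.diff_subset
  have hcov : Set.Iio lam.ord ⊆ Set.Iio β ∪ cbSet lam β := by
    intro x hx
    by_cases hxβ : x < β
    · exact Or.inl hxβ
    · exact Or.inr ⟨hx, hxβ⟩
  refine le_antisymm ?_ ?_
  · rw [← mk_Iio_ord lam]; exact Cardinal.mk_le_mk_of_subset hsub
  · by_contra hlt
    push_neg at hlt
    have h1 : #(Set.Iio lam.ord) ≤ #(Set.Iio β) + #(cbSet lam β) :=
      le_trans (Cardinal.mk_le_mk_of_subset hcov) (Cardinal.mk_union_le _ _)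
    have h2 : #(Set.Iio β) < Cardinal.lift.{1} lam := by
      rw [Ordinal.mk_Iio_ordinal]
      exact Cardinal.lift_lt.2 (Cardinal.lt_ord.1 hβ)
    have h3 : #(Set.Iio β) + #(cbSet lam β) < Cardinal.lift.{1} lam :=
      Cardinal.add_lt_of_lt (by simpa using hreg.1) h2 hlt
    rw [mk_Iio_ord lam] at h1
    exact lt_irrefl _ (lt_of_le_of_lt h1 h3)

lemma FIB_base {lam : Cardinal.{0}} (hreg : lam.IsRegular) : FIB lam (baseG lam) := by
  intro s hs hsf
  have hlam0 : (0 : Ordinal.{0}) < lam.ord := by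
    rw [Cardinal.lt_ord, Ordinal.card_zero]; exact hreg.pos
  have hcl : ∀ s : Set (Set Ordinal.{0}), s.Finite → s ⊆ baseG lam →
      ∃ β < lam.ord, cbSet lam β ⊆ Set.Iio lam.ord ∩ ⋂₀ s := by
    intro s hsf
    refine Set.Finite.induction_on (motive := fun s _ => s ⊆ baseG lam →
      ∃ β < lam.ord, cbSet lam β ⊆ Set.Iio lam.ord ∩ ⋂₀ s) s hsf ?_ ?_
    · intro _
      refine ⟨0, hlam0, ?_⟩
      intro x hx
      exact ⟨hx.1, by simp⟩
    · intro A s' hA hs'f IH hins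
      obtain ⟨β₂, hβ₂, hsub₂⟩ := IH (subset_trans (Set.subset_insert _ _) hins)
      obtain ⟨β₁, hβ₁, hAeq⟩ := hins (Set.mem_insert _ _)
      refine ⟨max β₁ β₂, max_lt hβ₁ hβ₂, ?_⟩
      intro x hx
      have hx1 : x ∈ cbSet lam β₁ := ⟨hx.1, fun hlt => hx.2
        (Set.mem_Iio.2 (lt_of_lt_of_le (Set.mem_Iio.1 hlt) (le_max_left _ _)))⟩
      have hx2 : x ∈ cbSet lam β₂ := ⟨hx.1, fun hlt => hx.2
        (Set.mem_Iio.2 (lt_of_lt_of_le (Set.mem_Iio.1 hlt) (le_max_right _ _)))⟩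
      have := hsub₂ hx2
      refine ⟨hx.1, ?_⟩
      rw [Set.sInter_insert]
      exact ⟨hAeq ▸ hx1, this.2⟩
  obtain ⟨β, hβ, hsub⟩ := hcl s hsf hs
  exact big_mono hsub Set.inter_subset_left (big_cb hreg hβ)

lemma coverLemma (lam : Cardinal.{0}) (task : Ordinal.{1} → TaskT lam)
    (Q : Ordinal.{1} → Prop) (s : Set (Set Ordinal.{0})) (hsf : s.Finite)
    (hs : s ⊆ baseG lam ∪ {A | ∃ j, Q j ∧ A = addl lam task j}) :
    s ⊆ baseG lam ∨ ∃ j, Q j ∧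
      s ⊆ baseG lam ∪ {A | ∃ k, Q k ∧ k ≤ j ∧ A = addl lam task k} := by
  refine Set.Finite.induction_on (motive := fun s _ =>
    s ⊆ baseG lam ∪ {A | ∃ j, Q j ∧ A = addl lam task j} →
    s ⊆ baseG lam ∨ ∃ j, Q j ∧
      s ⊆ baseG lam ∪ {A | ∃ k, Q k ∧ k ≤ j ∧ A = addl lam task k}) s hsf ?_ ?_ hs
  · intro _
    exact Or.inl (Set.empty_subset _)
  · intro A s' hA hs'f IH hins
    have hs' := IH (subset_trans (Set.subset_insert _ _) hins)
    rcases hins (Set.mem_insert _ _) with hbase | ⟨j₀, hQ₀, hAeq⟩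
    · rcases hs' with h | ⟨j, hQ, hsub⟩
      · exact Or.inl (Set.insert_subset hbase h)
      · exact Or.inr ⟨j, hQ, Set.insert_subset (Or.inl hbase) hsub⟩
    · rcases hs' with h | ⟨j, hQ, hsub⟩
      · exact Or.inr ⟨j₀, hQ₀, Set.insert_subset
          (Or.inr ⟨j₀, hQ₀, le_refl _, hAeq⟩)
          (subset_trans h Set.subset_union_left)⟩
      · rcases le_total j₀ j with hle | hle
        · exact Or.inr ⟨j, hQ, Set.insert_subset (Or.inr ⟨j₀, hQ₀, hle, hAeq⟩) hsub⟩
        · refine Or.inr ⟨j₀, hQ₀, Set.insert_subset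
            (Or.inr ⟨j₀, hQ₀, le_refl _, hAeq⟩) ?_⟩
          intro B hB
          rcases hsub hB with hb | ⟨k, hQk, hkj, hBeq⟩
          · exact Or.inl hb
          · exact Or.inr ⟨k, hQk, le_trans hkj hle, hBeq⟩

lemma FIB_insert {lam : Cardinal.{0}} {P : Set (Set Ordinal.{0})} {T : TaskT lam}
    (hP : FIB lam P)
    (hS : goodS lam T P (pick lam T P) ∨ pick lam T P = Set.Iio lam.ord) :
    ∀ s : Set (Set Ordinal.{0}), s ⊆ P ∪ {pick lam T P} → s.Finite →
      big lam (Set.Iio lam.ord ∩ ⋂₀ s) := by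
  intro s hs hsf
  set S := pick lam T P with hSdef
  by_cases hmem : S ∈ s
  · have hseq : s = insert S (s \ {S}) := by
      rw [Set.insert_diff_singleton, Set.insert_eq_of_mem hmem]
    have hsP : s \ {S} ⊆ P := by
      intro A hA
      rcases hs hA.1 with h | h
      · exact h
      · exact absurd h hA.2
    have halg : Set.Iio lam.ord ∩ ⋂₀ s =
        (Set.Iio lam.ord ∩ ⋂₀ (s \ {S})) ∩ S := by
      conv_lhs => rw [hseq]
      rw [Set.sInter_insert]
      ext x
      constructor
      · rintro ⟨h1, h2, h3⟩; exact ⟨⟨h1, h3⟩, h2⟩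
      · rintro ⟨⟨h1, h3⟩, h2⟩; exact ⟨h1, h2, h3⟩
    rw [halg]
    rcases hS with hgood | htriv
    · exact hgood.2.2 _ hsP (hsf.subset Set.diff_subset)
    · have hbig := hP _ hsP (hsf.subset Set.diff_subset)
      have halg2 : (Set.Iio lam.ord ∩ ⋂₀ (s \ {S})) ∩ S =
          Set.Iio lam.ord ∩ ⋂₀ (s \ {S}) := by
        rw [htriv]
        exact Set.inter_eq_left.mpr Set.inter_subset_left
      rw [halg2]
      exact hbig
  · have hsP : s ⊆ P := by
      intro A hA
      rcases hs hA with h | h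
      · exact h
      · exact absurd (Set.mem_singleton_iff.1 h ▸ hA) hmem
    exact hP _ hsP hsf

lemma FIB_Hset {lam : Cardinal.{0}} (hreg : lam.IsRegular)
    (task : Ordinal.{1} → TaskT lam) :
    ∀ i : Ordinal.{1}, FIB lam (Hset lam task i) := by
  intro i
  induction i using Ordinal.induction with
  | h i IH =>
    have hGset : ∀ j, j ≤ i → FIB lam (Gset lam task j) := by
      intro j hj s hsG hsf
      rcases coverLemma lam task (· < j) s hsf hsG with h | ⟨j', hj', hsub⟩
      · exact FIB_base hreg s h hsf
      · refine IH j' (lt_of_lt_of_le hj' hj) s ?_ hsf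
        intro A hA
        rcases hsub hA with h | ⟨k, _, hk, hAeq⟩
        · exact Or.inl h
        · exact Or.inr ⟨k, hk, hAeq⟩
    intro s hsH hsf
    rcases coverLemma lam task (· ≤ i) s hsf hsH with h | ⟨j, hj, hsub⟩
    · exact FIB_base hreg s h hsf
    · have hFins := FIB_insert (hGset j hj) (pick_cases lam (task j) (Gset lam task j))
      refine hFins s ?_ hsf
      intro A hA
      rcases hsub hA with h | ⟨k, _, hk, hAeq⟩
      · exact Or.inl (Or.inl h)
      · rcases lt_or_eq_of_le hk with hlt | heq
        · exact Or.inl (Or.inr ⟨k, hlt, hAeq⟩)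
        · right
          rw [hAeq, heq, addl_eq]
          rfl

lemma FIB_Gset_all {lam : Cardinal.{0}} (hreg : lam.IsRegular)
    (task : Ordinal.{1} → TaskT lam) (i : Ordinal.{1}) :
    FIB lam (Gset lam task i) := by
  intro s hsG hsf
  rcases coverLemma lam task (· < i) s hsf hsG with h | ⟨j', _, hsub⟩
  · exact FIB_base hreg s h hsf
  · refine FIB_Hset hreg task j' s ?_ hsf
    intro A hA
    rcases hsub hA with h | ⟨k, _, hk, hAeq⟩
    · exact Or.inl h
    · exact Or.inr ⟨k, hk, hAeq⟩

lemma FIB_global {lam : Cardinal.{0}} (hreg : lam.IsRegular)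
    (task : Ordinal.{1} → TaskT lam) :
    ∀ s : Set (Set Ordinal.{0}),
      s ⊆ baseG lam ∪ {A | ∃ j : Ordinal.{1}, A = addl lam task j} → s.Finite →
      big lam (Set.Iio lam.ord ∩ ⋂₀ s) := by
  intro s hs hsf
  rcases coverLemma lam task (fun _ => True) s hsf
    (by intro A hA; rcases hs hA with h | ⟨j, hj⟩
        exacts [Or.inl h, Or.inr ⟨j, trivial, hj⟩]) with h | ⟨j, _, hsub⟩
  · exact FIB_base hreg s h hsf
  · refine FIB_Hset hreg task j s ?_ hsf
    intro A hA
    rcases hsub hA with h | ⟨k, _, hk, hAeq⟩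
    · exact Or.inl h
    · exact Or.inr ⟨k, hk, hAeq⟩

lemma exist_good {lam : Cardinal.{0}} (hreg : lam.IsRegular)
    {P : Set (Set Ordinal.{0})} (hP : FIB lam P)
    (hPc : #P ≤ Cardinal.lift.{1} lam) (T : TaskT lam) :
    ∃ S, goodS lam T P S := by
  classical
  obtain X | pp := T
  · by_contra hcon
    push_neg at hcon
    have hget : ∀ S, S ⊆ Set.Iio lam.ord → handles lam (Sum.inl X) S →
        ¬ goodS lam (Sum.inl X) P S →
        ∃ s, s ⊆ P ∧ s.Finite ∧ ¬ big lam ((Set.Iio lam.ord ∩ ⋂₀ s) ∩ S) := by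
      intro S hS hh hng
      by_contra hc2
      push_neg at hc2
      exact hng ⟨hS, hh, hc2⟩
    obtain ⟨s1, hs1P, hs1f, hs1b⟩ := hget X.1 X.2 (Or.inl rfl) (hcon X.1)
    obtain ⟨s2, hs2P, hs2f, hs2b⟩ := hget (Set.Iio lam.ord \ X.1) Set.diff_subset
      (Or.inr rfl) (hcon _)
    have hb := hP (s1 ∪ s2) (Set.union_subset hs1P hs2P) (hs1f.union hs2f)
    have hsmall : ∀ Y : Set Ordinal.{0}, Y ⊆ Set.Iio lam.ord → ¬ big lam Y →
        #Y < Cardinal.lift.{1} lam := by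
      intro Y hY hnb
      refine lt_of_le_of_ne ?_ hnb
      rw [← mk_Iio_ord lam]
      exact Cardinal.mk_le_mk_of_subset hY
    have hcover : Set.Iio lam.ord ∩ ⋂₀ (s1 ∪ s2) ⊆
        ((Set.Iio lam.ord ∩ ⋂₀ s1) ∩ X.1) ∪
        ((Set.Iio lam.ord ∩ ⋂₀ s2) ∩ (Set.Iio lam.ord \ X.1)) := by
      intro x hx
      rw [Set.sInter_union] at hx
      by_cases hxX : x ∈ X.1
      · exact Or.inl ⟨⟨hx.1, hx.2.1⟩, hxX⟩
      · exact Or.inr ⟨⟨hx.1, hx.2.2⟩, hx.1, hxX⟩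
    have hlt : #↥(Set.Iio lam.ord ∩ ⋂₀ (s1 ∪ s2)) < Cardinal.lift.{1} lam := by
      refine lt_of_le_of_lt (Cardinal.mk_le_mk_of_subset hcover) ?_
      refine lt_of_le_of_lt (Cardinal.mk_union_le _ _) ?_
      refine Cardinal.add_lt_of_lt (by simpa using hreg.1) ?_ ?_
      · exact hsmall _ (fun x hx => hx.1.1) hs1b
      · exact hsmall _ (fun x hx => hx.1.1) hs2b
    exact hlt.ne hb
  · set Fam : Set (Set Ordinal.{0}) :=
      (fun s => Set.Iio lam.ord ∩ ⋂₀ s) '' {s | s ⊆ P ∧ s.Finite} with hFam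
    have hFamne : Fam.Nonempty := ⟨_, ⟨∅, ⟨Set.empty_subset _, Set.finite_empty⟩, rfl⟩⟩
    have hFamc : #Fam ≤ Cardinal.lift.{1} lam := by
      refine le_trans Cardinal.mk_image_le ?_
      have hsurj : Function.Surjective (fun u : Finset ↥P =>
          (⟨Subtype.val '' (↑u : Set ↥P), by rintro _ ⟨x, _, rfl⟩; exact x.2,
            (u.finite_toSet.image _)⟩ : ↥{s : Set (Set Ordinal.{0}) | s ⊆ P ∧ s.Finite})) := by
        rintro ⟨s, hsP, hsf⟩
        have hpre : ({x : ↥P | x.1 ∈ s}).Finite := by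
          refine Set.Finite.preimage ?_ hsf
          exact Set.injOn_of_injective Subtype.val_injective
        refine ⟨hpre.toFinset, ?_⟩
        apply Subtype.ext
        simp only
        ext y
        constructor
        · rintro ⟨x, hx, rfl⟩
          rw [Set.Finite.coe_toFinset] at hx
          exact hx
        · intro hy
          exact ⟨⟨y, hsP hy⟩, by rw [Set.Finite.coe_toFinset]; exact hy, rfl⟩
      refine le_trans (Cardinal.mk_le_of_surjective hsurj) ?_
      rcases finite_or_infinite ↥P with h | h
      · exact le_trans Cardinal.mk_le_aleph0 (by simpa using hreg.1)
      · rw [Cardinal.mk_finset_of_infinite]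
        exact hPc
    obtain ⟨e⟩ : Nonempty (↥Fam ↪ ↥(Set.Iio lam.ord)) := by
      rw [← Cardinal.le_def, mk_Iio_ord]
      exact hFamc
    haveI : Nonempty ↥Fam := hFamne.to_subtype
    set Bfun : ↥(Set.Iio lam.ord) → Set Ordinal.{0} :=
      fun i => (Function.invFun e i).1 with hBfun
    have hBprop : ∀ i, Bfun i ⊆ Set.Iio lam.ord ∧ #(Bfun i) = Cardinal.lift.{1} lam := by
      intro i
      obtain ⟨s, hs, hval⟩ := (Function.invFun e i).2
      constructor
      · rw [hBfun]; simp only; rw [← hval]; exact Set.inter_subset_left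
      · rw [hBfun]; simp only; rw [← hval]; exact hP s hs.1 hs.2
    obtain ⟨A, hAfil, hAbig⟩ := key_lemma hreg pp.2 Bfun hBprop
    refine ⟨Set.Iio lam.ord \ A, Set.diff_subset, ⟨A, hAfil, rfl⟩, ?_⟩
    intro s hs hsf
    have hXmem : (Set.Iio lam.ord ∩ ⋂₀ s) ∈ Fam := ⟨s, ⟨hs, hsf⟩, rfl⟩
    obtain ⟨i, hi⟩ := Function.invFun_surjective e.injective
      (⟨_, hXmem⟩ : ↥Fam)
    have hBi : Bfun i = Set.Iio lam.ord ∩ ⋂₀ s := by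
      rw [hBfun]; simp only; rw [hi]
    have hbig := hAbig i
    rw [hBi] at hbig
    have halg : (Set.Iio lam.ord ∩ ⋂₀ s) ∩ (Set.Iio lam.ord \ A) =
        (Set.Iio lam.ord ∩ ⋂₀ s) \ A := by
      ext x
      constructor
      · rintro ⟨hx1, hx2⟩; exact ⟨hx1, hx2.2⟩
      · rintro ⟨hx1, hx2⟩; exact ⟨hx1, hx1.1, hx2⟩
    rw [big, halg]
    exact hbig

lemma Gset_card {lam : Cardinal.{0}} (hreg : lam.IsRegular)
    (task : Ordinal.{1} → TaskT lam) {i : Ordinal.{1}}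
    (hi : i < (Cardinal.lift.{1} (Order.succ lam)).ord) :
    #(Gset lam task i) ≤ Cardinal.lift.{1} lam := by
  have h1 : #(baseG lam) ≤ Cardinal.lift.{1} lam := by
    have : baseG lam = cbSet lam '' (Set.Iio lam.ord) := by
      ext A
      constructor
      · rintro ⟨β, hβ, rfl⟩; exact ⟨β, hβ, rfl⟩
      · rintro ⟨β, hβ, rfl⟩; exact ⟨β, hβ, rfl⟩
    rw [this]
    exact le_trans Cardinal.mk_image_le (le_of_eq (mk_Iio_ord lam))
  have h2 : #({A | ∃ j, j < i ∧ A = addl lam task j} : Set (Set Ordinal.{0})) ≤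
      Cardinal.lift.{1} lam := by
    have heq : {A | ∃ j, j < i ∧ A = addl lam task j} =
        (addl lam task) '' (Set.Iio i) := by
      ext A
      constructor
      · rintro ⟨j, hj, rfl⟩; exact ⟨j, hj, rfl⟩
      · rintro ⟨j, hj, rfl⟩; exact ⟨j, hj, rfl⟩
    have hicard : i.card ≤ Cardinal.lift.{1} lam := by
      have := Cardinal.lt_ord.1 hi
      rwa [Cardinal.lift_succ, Order.lt_succ_iff] at this
    rw [← Cardinal.lift_le.{2}]
    calc Cardinal.lift.{2} #({A | ∃ j, j < i ∧ A = addl lam task j} : Set (Set Ordinal.{0}))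
        = Cardinal.lift.{2} #((addl lam task) '' (Set.Iio i)) := by rw [heq]
      _ ≤ Cardinal.lift.{1} #(Set.Iio i) := Cardinal.mk_image_le_lift
      _ = Cardinal.lift.{1} (Cardinal.lift.{2} i.card) := by rw [Ordinal.mk_Iio_ordinal]
      _ = Cardinal.lift.{2} i.card := Cardinal.lift_id'.{1,2} _
      _ ≤ Cardinal.lift.{2} (Cardinal.lift.{1} lam) := Cardinal.lift_le.2 hicard
  refine le_trans (Cardinal.mk_union_le _ _) ?_
  rw [← Cardinal.add_eq_self (c := Cardinal.lift.{1} lam) (by simpa using hreg.1)]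
  exact add_le_add h1 h2

lemma good_at {lam : Cardinal.{0}} (hreg : lam.IsRegular)
    (task : Ordinal.{1} → TaskT lam) {i : Ordinal.{1}}
    (hi : i < (Cardinal.lift.{1} (Order.succ lam)).ord) :
    goodS lam (task i) (Gset lam task i) (addl lam task i) := by
  rw [addl_eq]
  exact pick_good lam (task i) (Gset lam task i)
    (exist_good hreg (FIB_Gset_all hreg task i) (Gset_card hreg task hi) (task i))

end Aux

/-- Proposition 3.6: assuming `2^lam = lam⁺` there is a uniform ultrafilter on `lam`
containing no `fil(p)` for `p ∈ Q*(𝓕^pr)`. -/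
theorem stmt18 (lam : Cardinal.{0}) (hreg : lam.IsRegular) (hunc : ℵ₀ < lam)
    (h2 : (2 : Cardinal.{0}) ^ lam = Order.succ lam) :
    ∃ D : Set (Set Ordinal.{0}), IsUltraOn D (Set.Iio lam.ord) ∧
      IsUniform lam D ∧ ∀ p ∈ Qstar lam (Fpr lam), ¬ fil lam p ⊆ D := by
  classical
  set bound := (Cardinal.lift.{1} (Order.succ lam)).ord with hbound
  have htL : #({X : Set Ordinal.{0} // X ⊆ Set.Iio lam.ord}) ≤
      Cardinal.lift.{1} (Order.succ lam) := by
    have hinj : Function.Injective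
        (fun X : {X : Set Ordinal.{0} // X ⊆ Set.Iio lam.ord} =>
          (Subtype.val ⁻¹' X.1 : Set ↥(Set.Iio lam.ord))) := by
      intro X1 X2 heq
      dsimp only at heq
      apply Subtype.ext
      ext x
      constructor
      · intro hx
        have hx' : (⟨x, X1.2 hx⟩ : ↥(Set.Iio lam.ord)) ∈ Subtype.val ⁻¹' X1.1 := hx
        rw [heq] at hx'
        exact hx'
      · intro hx
        have hx' : (⟨x, X2.2 hx⟩ : ↥(Set.Iio lam.ord)) ∈ Subtype.val ⁻¹' X2.1 := hx
        rw [← heq] at hx'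
        exact hx'
    refine le_trans (Cardinal.mk_le_of_injective hinj) ?_
    rw [Cardinal.mk_set, mk_Iio_ord, twoL h2]
  have htR := mk_QstarSub hreg h2
  have hMinf : ℵ₀ ≤ Cardinal.lift.{1} (Order.succ lam) :=
    le_trans (by simpa using hreg.1) (Cardinal.lift_le.2 (Order.le_succ lam))
  have htask : #(TaskT lam) ≤ Cardinal.lift.{1} (Order.succ lam) := by
    rw [TaskT, Cardinal.mk_sum, Cardinal.lift_id, Cardinal.lift_id,
      ← Cardinal.add_eq_self hMinf]
    exact add_le_add htL htR
  haveI hTne : Nonempty (TaskT lam) := ⟨Sum.inl ⟨∅, Set.empty_subset _⟩⟩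
  obtain ⟨emb⟩ : Nonempty (TaskT lam ↪ bound.ToType) := by
    rw [← Cardinal.le_def, Cardinal.mk_toType, hbound, Cardinal.card_ord]
    exact htask
  set tsk : Ordinal.{1} → TaskT lam := fun i =>
    if h : i < bound then Function.invFun emb ((Ordinal.ToType.mk (o := bound)) ⟨i, h⟩)
    else Classical.arbitrary _ with htskdef
  have htsk : ∀ T : TaskT lam, ∃ i, i < bound ∧ tsk i = T := by
    intro T
    refine ⟨((Ordinal.ToType.mk (o := bound)).symm (emb T)).1,
      ((Ordinal.ToType.mk (o := bound)).symm (emb T)).2, ?_⟩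
    rw [htskdef]
    simp only
    rw [dif_pos (show ((((Ordinal.ToType.mk (o := bound)).symm (emb T)) : ↥(Set.Iio bound)) : Ordinal.{1}) < bound from ((Ordinal.ToType.mk (o := bound)).symm (emb T)).2)]
    have heta : (Ordinal.ToType.mk (o := bound))
        ⟨((Ordinal.ToType.mk (o := bound)).symm (emb T)).1,
          ((Ordinal.ToType.mk (o := bound)).symm (emb T)).2⟩ = emb T := by
      exact (Ordinal.ToType.mk (o := bound)).apply_symm_apply (emb T)
    rw [heta]
    exact Function.leftInverse_invFun emb.injective T
  set Ginf : Set (Set Ordinal.{0}) :=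
    baseG lam ∪ {A | ∃ j : Ordinal.{1}, A = addl lam tsk j} with hGinf
  set D : Set (Set Ordinal.{0}) := {A | A ⊆ Set.Iio lam.ord ∧
    ∃ s : Set (Set Ordinal.{0}), s ⊆ Ginf ∧ s.Finite ∧
      Set.Iio lam.ord ∩ ⋂₀ s ⊆ A} with hD
  have hGbig : ∀ s, s ⊆ Ginf → s.Finite → big lam (Set.Iio lam.ord ∩ ⋂₀ s) :=
    fun s hs hsf => FIB_global hreg tsk s hs hsf
  have hne : ∀ s, s ⊆ Ginf → s.Finite → (Set.Iio lam.ord ∩ ⋂₀ s).Nonempty := by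
    intro s hs hsf
    rw [← Set.nonempty_coe_sort]
    refine Cardinal.mk_ne_zero_iff.1 ?_
    rw [hGbig s hs hsf]
    intro h0
    exact hreg.pos.ne' (Cardinal.lift_eq_zero.1 h0)
  have haddl_sub : ∀ j, addl lam tsk j ⊆ Set.Iio lam.ord := by
    intro j
    rcases pick_cases lam (tsk j) (Gset lam tsk j) with h | h
    · rw [addl_eq]; exact h.1
    · rw [addl_eq, h]
  have haddlD : ∀ j, addl lam tsk j ∈ D := by
    intro j
    refine ⟨haddl_sub j, {addl lam tsk j}, ?_, Set.finite_singleton _, ?_⟩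
    · intro A hA
      rw [Set.mem_singleton_iff] at hA
      exact Or.inr ⟨j, hA⟩
    · rw [Set.sInter_singleton]
      exact Set.inter_subset_right
  refine ⟨D, ⟨⟨fun A hA => hA.1, ?_, ?_, ?_, ?_⟩, ?_⟩, ?_, ?_⟩
  · -- Iio ∈ D
    exact ⟨subset_rfl, ∅, Set.empty_subset _, Set.finite_empty, by simp⟩
  · -- upward closed
    rintro A ⟨hA1, s, h1a, h2a, h3a⟩ B hAB hBsub
    exact ⟨hBsub, s, h1a, h2a, subset_trans h3a hAB⟩
  · -- intersections
    rintro A ⟨hA1, s, h1a, h2a, h3a⟩ B ⟨hB1, s', h1b, h2b, h3b⟩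
    refine ⟨subset_trans Set.inter_subset_left hA1, s ∪ s',
      Set.union_subset h1a h1b, h2a.union h2b, ?_⟩
    intro x hx
    rw [Set.sInter_union] at hx
    exact ⟨h3a ⟨hx.1, hx.2.1⟩, h3b ⟨hx.1, hx.2.2⟩⟩
  · -- ∅ ∉ D
    rintro ⟨h1, s, hs1, hs2, hs3⟩
    obtain ⟨x, hx⟩ := hne s hs1 hs2
    exact absurd (hs3 hx) (Set.notMem_empty x)
  · -- ultra
    intro A hA
    obtain ⟨i, hib, hti⟩ := htsk (Sum.inl ⟨A, hA⟩)
    have hgood := good_at hreg tsk hib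
    rw [hti] at hgood
    obtain ⟨hsubS, hh, _⟩ := hgood
    have hmem : addl lam tsk i ∈ D := haddlD i
    rcases hh with h | h
    · left; rwa [h] at hmem
    · right; rwa [h] at hmem
  · -- uniform
    rintro A ⟨hAsub, s, hs1, hs2, hs3⟩
    refine le_antisymm ?_ ?_
    · rw [← mk_Iio_ord lam]
      exact Cardinal.mk_le_mk_of_subset hAsub
    · rw [← hGbig s hs1 hs2]
      exact Cardinal.mk_le_mk_of_subset hs3
  · -- kills every p
    intro p hp
    obtain ⟨i, hib, hti⟩ := htsk (Sum.inr ⟨p, hp⟩)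
    have hgood := good_at hreg tsk hib
    rw [hti] at hgood
    obtain ⟨hsubS, hh, _⟩ := hgood
    obtain ⟨A, hAfil, hAeq⟩ := hh
    intro hsubD
    have hAD : A ∈ D := hsubD hAfil
    have hcD : Set.Iio lam.ord \ A ∈ D := by
      rw [← hAeq]
      exact haddlD i
    obtain ⟨_, s, hs1, hs2, hs3⟩ := hAD
    obtain ⟨_, s', hs1', hs2', hs3'⟩ := hcD
    obtain ⟨x, hx⟩ := hne (s ∪ s') (Set.union_subset hs1 hs1') (hs2.union hs2')
    rw [Set.sInter_union] at hx
    have hxA : x ∈ A := hs3 ⟨hx.1, hx.2.1⟩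
    have hxc : x ∈ Set.Iio lam.ord \ A := hs3' ⟨hx.1, hx.2.2⟩
    exact hxc.2 hxA

end

end RS889
end
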